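/- arXiv:2009.00650 — 6 statements merged into one kernel-verified Lean document; each statement's English description precedes it below -/
import Mathlib

section
/- A set partition π of [n] avoids the pattern 13/2 if and only if its RGF w(π) is weakly increasing. -/
open scoped Classical
noncomputable section

/-- A set partition of `[n]` is modeled as a setoid (equivalence relation) on `Fin n`. -/
abbrev SetPartition (n : ℕ) := Setoid (Fin n)

/-- Pattern containment for set partitions: `P` contains `Q` if there is a strictly
increasing map along which the block structure of `Q` is induced by that of `P`. -/
def SPContains {n k : ℕ} (P : SetPartition n) (Q : SetPartition k) : Prop :=
  ∃ f : Fin k → Fin n, StrictMono f ∧ ∀ a b : Fin k, Q.r a b ↔ P.r (f a) (f b)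

def SPAvoids {n k : ℕ} (P : SetPartition n) (Q : SetPartition k) : Prop :=
  ¬ SPContains P Q

noncomputable instance instFintypeSetoidFin (n : ℕ) : Fintype (SetPartition n) :=
  Fintype.ofInjective (fun P => P.r) fun P Q h => Setoid.ext fun a b => by simp only at h; rw [show P.r = Q.r from h]

/-- The (0-based) minimum of the block containing `i`. -/
def blockMin {n : ℕ} (P : SetPartition n) (i : Fin n) : ℕ :=
  sInf {j : ℕ | ∃ h : j < n, P.r ⟨j, h⟩ i}

/-- The (0-based) maximum of the block containing `i`. -/
def blockMax {n : ℕ} (P : SetPartition n) (i : Fin n) : ℕ :=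
  sSup {j : ℕ | ∃ h : j < n, P.r ⟨j, h⟩ i}

/-- The spread statistic: the sum over blocks of (max − min). -/
def spread {n : ℕ} (P : SetPartition n) : ℕ :=
  ∑ i ∈ Finset.univ.filter (fun i : Fin n => blockMin P i = (i : ℕ)),
    (blockMax P i - (i : ℕ))

/-- The number of blocks. -/
def blockNum {n : ℕ} (P : SetPartition n) : ℕ :=
  (Finset.univ.image (fun i : Fin n => Quotient.mk P i)).card

/-- The restricted growth function of a partition: `rgf P i` is the index (starting
from 1) of the block of `i` when the blocks are listed in order of their minima. -/
def rgf {n : ℕ} (P : SetPartition n) (i : Fin n) : ℕ :=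
  (Finset.univ.filter (fun j : Fin n => blockMin P j = (j : ℕ) ∧ (j : ℕ) ≤ blockMin P i)).card

/-- `w : Fin n → ℕ` is a restricted growth function. -/
def IsRGF {n : ℕ} (w : Fin n → ℕ) : Prop :=
  ∀ i : Fin n, 1 ≤ w i ∧ w i ≤ (Finset.univ.filter (fun j : Fin n => j < i)).sup w + 1

/-- patterns -/
def p123 : SetPartition 3 := Setoid.ker ![0, 0, 0]
def p1_2_3 : SetPartition 3 := Setoid.ker ![0, 1, 2]
def p13_2 : SetPartition 3 := Setoid.ker ![0, 1, 0]
def p12_3 : SetPartition 3 := Setoid.ker ![0, 0, 1]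
def p1_23 : SetPartition 3 := Setoid.ker ![0, 1, 1]
def p13_24 : SetPartition 4 := Setoid.ker ![0, 1, 0, 1]


lemma mem_set {n : ℕ} (P : SetPartition n) (i : Fin n) :
    (i : ℕ) ∈ {j : ℕ | ∃ h : j < n, P.r ⟨j, h⟩ i} :=
  ⟨i.2, P.refl i⟩

lemma blockMin_le {n : ℕ} (P : SetPartition n) (i : Fin n) : blockMin P i ≤ i :=
  Nat.sInf_le (mem_set P i)

lemma blockMin_lt {n : ℕ} (P : SetPartition n) (i : Fin n) : blockMin P i < n :=
  lt_of_le_of_lt (blockMin_le P i) i.2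

lemma r_blockMin {n : ℕ} (P : SetPartition n) (i : Fin n) :
    P.r ⟨blockMin P i, blockMin_lt P i⟩ i := by
  obtain ⟨h, hr⟩ := Nat.sInf_mem (⟨(i:ℕ), mem_set P i⟩ : Set.Nonempty _)
  exact hr

lemma blockMin_eq_of_r {n : ℕ} (P : SetPartition n) {a b : Fin n} (h : P.r a b) :
    blockMin P a = blockMin P b := by
  unfold blockMin
  congr 1
  ext j
  exact ⟨fun ⟨hj, hr⟩ => ⟨hj, P.trans hr h⟩, fun ⟨hj, hr⟩ => ⟨hj, P.trans hr (P.symm h)⟩⟩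

lemma r_of_blockMin_eq {n : ℕ} (P : SetPartition n) {a b : Fin n}
    (h : blockMin P a = blockMin P b) : P.r a b := by
  have ha := r_blockMin P a
  have hb := r_blockMin P b
  have : (⟨blockMin P a, blockMin_lt P a⟩ : Fin n) = ⟨blockMin P b, blockMin_lt P b⟩ :=
    Fin.ext h
  rw [this] at ha
  exact P.trans (P.symm ha) hb

lemma blockMin_mk {n : ℕ} (P : SetPartition n) (i : Fin n) :
    blockMin P ⟨blockMin P i, blockMin_lt P i⟩ = blockMin P i :=
  blockMin_eq_of_r P (r_blockMin P i)

lemma rgf_le_of_le {n : ℕ} (P : SetPartition n) {i j : Fin n}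
    (h : blockMin P i ≤ blockMin P j) : rgf P i ≤ rgf P j := by
  apply Finset.card_le_card
  intro x hx
  simp only [Finset.mem_filter] at hx ⊢
  exact ⟨hx.1, hx.2.1, le_trans hx.2.2 h⟩

lemma rgf_lt_of_lt {n : ℕ} (P : SetPartition n) {i j : Fin n}
    (h : blockMin P j < blockMin P i) : rgf P j < rgf P i := by
  apply Finset.card_lt_card
  constructor
  · intro x hx
    simp only [Finset.mem_filter] at hx ⊢
    exact ⟨hx.1, hx.2.1, le_trans hx.2.2 h.le⟩
  · intro hsub
    have hm := hsub (Finset.mem_filter.mpr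
      ⟨Finset.mem_univ (⟨blockMin P i, blockMin_lt P i⟩ : Fin n),
        blockMin_mk P i, le_refl _⟩)
    simp only [Finset.mem_filter] at hm
    exact absurd hm.2.2 (not_le.mpr h)

lemma blockMin_le_of_rgf_le {n : ℕ} (P : SetPartition n) {i j : Fin n}
    (h : rgf P i ≤ rgf P j) : blockMin P i ≤ blockMin P j := by
  by_contra hc
  exact absurd h (not_le.mpr (rgf_lt_of_lt P (not_le.mp hc)))

/-- a partition avoids `13/2` iff its RGF is weakly increasing. -/
theorem avoids_13_2_iff_monotone (n : ℕ) (P : SetPartition n) :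
    SPAvoids P p13_2 ↔ Monotone (rgf P) := by
  constructor
  · intro hav i j hij
    apply rgf_le_of_le
    by_contra hc
    push_neg at hc
    have hij' : i < j := lt_of_le_of_ne hij (fun h => by rw [h] at hc; exact lt_irrefl _ hc)
    set m : Fin n := ⟨blockMin P j, blockMin_lt P j⟩ with hm
    have hmi : m < i := by
      rw [Fin.lt_def]
      exact lt_of_lt_of_le hc (blockMin_le P i)
    have hmj : P.r m j := r_blockMin P j
    have hnmi : ¬ P.r m i := by
      intro h
      have := blockMin_eq_of_r P h
      rw [blockMin_mk P j] at this
      exact absurd this.ge (not_le.mpr hc)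
    have hnij : ¬ P.r i j := by
      intro h
      have := blockMin_eq_of_r P h
      exact absurd this.le (not_le.mpr hc)
    apply hav
    refine ⟨![m, i, j], ?_, ?_⟩
    · intro a b hab
      fin_cases a <;> fin_cases b <;>
        simp_all <;> first | exact hmi | exact hij' | exact lt_trans hmi hij'
    · intro a b
      have hnim : ¬ P.r i m := fun h => hnmi (P.symm h)
      have hnji : ¬ P.r j i := fun h => hnij (P.symm h)
      have hjm : P.r j m := P.symm hmj
      fin_cases a <;> fin_cases b <;> unfold p13_2 <;>
        simp_all [p13_2, Setoid.ker_def, Function.onFun] <;>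
        first
          | exact P.refl _
          | exact hmj
          | exact hjm
  · rintro hmono ⟨f, hf, hiff⟩
    have h02 : P.r (f 0) (f 2) := (hiff 0 2).mp rfl
    have h01 : ¬ P.r (f 0) (f 1) := fun h => Nat.zero_ne_one ((hiff 0 1).mpr h)
    have l01 : blockMin P (f 0) ≤ blockMin P (f 1) :=
      blockMin_le_of_rgf_le P (hmono (hf (by decide : (0:Fin 3) < 1)).le)
    have l12 : blockMin P (f 1) ≤ blockMin P (f 2) :=
      blockMin_le_of_rgf_le P (hmono (hf (by decide : (1:Fin 3) < 2)).le)
    have e02 : blockMin P (f 0) = blockMin P (f 2) := blockMin_eq_of_r P h02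
    have : blockMin P (f 0) = blockMin P (f 1) := le_antisymm l01 (e02 ▸ l12)
    exact h01 (r_of_blockMin_eq P this)


end
end

section
/- For n ≥ 1, the joint generating function SB_n(12/3; q, t) = Σ_{π ∈ Π_n(12/3)} q^{spread(π)} t^{block(π)} equals t^n + Σ_{i=1}^{n-1} t^i q^{n-i} [i]_q, where [i]_q = 1 + q + … + q^{i-1}. -/
open scoped Classical
noncomputable section

/-- The joint generating function of spread and block over partitions of `[n]`
avoiding the pattern `Q`. -/
def SB {k : ℕ} (n : ℕ) (Q : SetPartition k) (q t : ℚ) : ℚ :=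
  ∑ P ∈ Finset.univ.filter (fun P : SetPartition n => SPAvoids P Q),
    q ^ spread P * t ^ blockNum P

-- auxiliary definitions and lemmas
def pf (n m s : ℕ) (x : Fin n) : ℕ :=
  if (x:ℕ) = m ∨ s ≤ (x:ℕ) then m else (x:ℕ)
def pms (n m s : ℕ) : SetPartition n := Setoid.ker (pf n m s)
def P0 (n : ℕ) : SetPartition n := Setoid.ker (fun x : Fin n => (x:ℕ))

lemma pms_r {n m s : ℕ} {a b : Fin n} : (pms n m s).r a b ↔ pf n m s a = pf n m s b :=
  Iff.rfl
lemma P0_r {n : ℕ} {a b : Fin n} : (P0 n).r a b ↔ (a:ℕ) = (b:ℕ) := Iff.rfl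

lemma pf_eq_m_iff {n m s : ℕ} (hm : m < s) (x : Fin n) :
    pf n m s x = m ↔ ((x:ℕ) = m ∨ s ≤ (x:ℕ)) := by
  unfold pf; split <;> simp_all

lemma avoids_iff {n : ℕ} (P : SetPartition n) :
    SPAvoids P p12_3 ↔ ∀ x y z : Fin n, x < y → y < z → P.r x y → P.r x z := by
  constructor
  · intro hav x y z hxy hyz hrxy
    by_contra hxz
    apply hav
    refine ⟨![x, y, z], ?_, ?_⟩
    · intro a b hab
      fin_cases a <;> fin_cases b <;> simp_all <;> omega
    · have hyz' : ¬ P.r y z := fun h => hxz (P.trans hrxy h)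
      intro a b
      fin_cases a <;> fin_cases b <;>
        simp only [Matrix.cons_val_zero, Matrix.cons_val_one, Matrix.head_cons,
          Matrix.cons_val_two, Matrix.tail_cons]
      · exact ⟨fun _ => P.refl x, fun _ => rfl⟩
      · exact ⟨fun _ => hrxy, fun _ => rfl⟩
      · exact ⟨fun h => absurd h Nat.zero_ne_one, fun h => absurd h hxz⟩
      · exact ⟨fun _ => P.symm hrxy, fun _ => rfl⟩
      · exact ⟨fun _ => P.refl y, fun _ => rfl⟩
      · exact ⟨fun h => absurd h Nat.zero_ne_one, fun h => absurd h hyz'⟩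
      · exact ⟨fun h => absurd h Nat.one_ne_zero, fun h => absurd (P.symm h) hxz⟩
      · exact ⟨fun h => absurd h Nat.one_ne_zero, fun h => absurd (P.symm h) hyz'⟩
      · exact ⟨fun _ => P.refl z, fun _ => rfl⟩
  · rintro H ⟨f, hf, hiff⟩
    have h01 : (0:Fin 3) < 1 := by decide
    have h12 : (1:Fin 3) < 2 := by decide
    have hr01 : P.r (f 0) (f 1) := (hiff 0 1).mp rfl
    have hr02 : P.r (f 0) (f 2) := H (f 0) (f 1) (f 2) (hf h01) (hf h12) hr01
    exact Nat.zero_ne_one ((hiff 0 2).mpr hr02)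

lemma blockNum_ker {n : ℕ} (f : Fin n → ℕ) :
    blockNum (Setoid.ker f) = (Finset.univ.image f).card := by
  classical
  set P := Setoid.ker f
  have hinj : Function.Injective (Quotient.lift f (fun a b (hab : f a = f b) => hab) :
      Quotient P → ℕ) := by
    intro a b
    induction a using Quotient.ind
    induction b using Quotient.ind
    intro h
    exact Quotient.sound h
  calc blockNum P = ((Finset.univ.image (fun i : Fin n => Quotient.mk P i)).image
        (Quotient.lift f (fun a b (hab : f a = f b) => hab))).card :=
        (Finset.card_image_of_injective _ hinj).symm
    _ = (Finset.univ.image f).card := by rw [Finset.image_image]; rfl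

lemma pf_image {n m s : ℕ} (hm : m < s) (hs : s < n) :
    Finset.univ.image (pf n m s) = Finset.range s := by
  ext j
  simp only [Finset.mem_image, Finset.mem_univ, true_and, Finset.mem_range]
  constructor
  · rintro ⟨x, rfl⟩
    unfold pf; split <;> [exact hm; omega]
  · intro hj
    by_cases hjm : j = m
    · exact ⟨⟨m, lt_trans hm hs⟩, by subst hjm; unfold pf; simp⟩
    · refine ⟨⟨j, lt_trans hj hs⟩, ?_⟩
      unfold pf; simp only []
      rw [if_neg]; omega

lemma blockNum_pms {n m s : ℕ} (hm : m < s) (hs : s < n) :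
    blockNum (pms n m s) = s := by
  rw [show pms n m s = Setoid.ker (pf n m s) from rfl, blockNum_ker, pf_image hm hs,
    Finset.card_range]

lemma blockNum_P0 {n : ℕ} : blockNum (P0 n) = n := by
  rw [show P0 n = Setoid.ker (fun x : Fin n => (x:ℕ)) from rfl, blockNum_ker,
    Finset.card_image_of_injective _ Fin.val_injective, Finset.card_univ, Fintype.card_fin]

lemma blockMin_pms_class {n m s : ℕ} (hm : m < s) (hs : s < n) (i : Fin n)
    (hi : (i:ℕ) = m ∨ s ≤ (i:ℕ)) : blockMin (pms n m s) i = m := by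
  have hfi : pf n m s i = m := (pf_eq_m_iff hm i).mpr hi
  apply le_antisymm
  · apply Nat.sInf_le
    exact ⟨lt_trans hm hs, by rw [pms_r, hfi]; exact (pf_eq_m_iff hm _).mpr (Or.inl rfl)⟩
  · have hmmem : m ∈ {j : ℕ | ∃ h : j < n, (pms n m s).r ⟨j, h⟩ i} :=
      ⟨lt_trans hm hs, by rw [pms_r, hfi]; exact (pf_eq_m_iff hm _).mpr (Or.inl rfl)⟩
    apply le_csInf ⟨m, hmmem⟩
    rintro j ⟨hj, hrj⟩
    rw [pms_r, hfi] at hrj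
    have := (pf_eq_m_iff hm _).mp hrj
    simp at this; omega

lemma blockMax_pms_class {n m s : ℕ} (hm : m < s) (hs : s < n) (i : Fin n)
    (hi : (i:ℕ) = m ∨ s ≤ (i:ℕ)) : blockMax (pms n m s) i = n - 1 := by
  have hfi : pf n m s i = m := (pf_eq_m_iff hm i).mpr hi
  have hmem : (n-1) ∈ {j : ℕ | ∃ h : j < n, (pms n m s).r ⟨j, h⟩ i} := by
    refine ⟨by omega, ?_⟩
    rw [pms_r, hfi]
    exact (pf_eq_m_iff hm _).mpr (Or.inr (by simp; omega))
  apply le_antisymm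
  · apply csSup_le ⟨_, hmem⟩
    rintro j ⟨hj, _⟩; omega
  · exact le_csSup ⟨n, fun j hj => le_of_lt hj.1⟩ hmem

lemma blockMin_pms_single {n m s : ℕ} (i : Fin n)
    (hi : ¬((i:ℕ) = m ∨ s ≤ (i:ℕ))) : blockMin (pms n m s) i = (i:ℕ) := by
  have hfi : pf n m s i = (i:ℕ) := by unfold pf; rw [if_neg hi]
  apply le_antisymm
  · exact Nat.sInf_le ⟨i.2, (pms n m s).refl _⟩
  · have himem : (i:ℕ) ∈ {j : ℕ | ∃ h : j < n, (pms n m s).r ⟨j, h⟩ i} :=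
      ⟨i.2, (pms n m s).refl _⟩
    apply le_csInf ⟨(i:ℕ), himem⟩
    rintro j ⟨hj, hrj⟩
    rw [pms_r, hfi] at hrj
    unfold pf at hrj
    split at hrj
    · omega
    · simp at hrj; omega

lemma blockMax_pms_single {n m s : ℕ} (i : Fin n)
    (hi : ¬((i:ℕ) = m ∨ s ≤ (i:ℕ))) : blockMax (pms n m s) i = (i:ℕ) := by
  have hfi : pf n m s i = (i:ℕ) := by unfold pf; rw [if_neg hi]
  apply le_antisymm
  · have himem : (i:ℕ) ∈ {j : ℕ | ∃ h : j < n, (pms n m s).r ⟨j, h⟩ i} :=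
      ⟨i.2, (pms n m s).refl _⟩
    apply csSup_le ⟨(i:ℕ), himem⟩
    rintro j ⟨hj, hrj⟩
    rw [pms_r, hfi] at hrj
    unfold pf at hrj
    split at hrj
    · omega
    · simp at hrj; omega
  · exact le_csSup ⟨n, fun j hj => le_of_lt hj.1⟩ ⟨i.2, (pms n m s).refl _⟩

lemma spread_pms {n m s : ℕ} (hm : m < s) (hs : s < n) :
    spread (pms n m s) = n - 1 - m := by
  unfold spread
  have hmem : (⟨m, lt_trans hm hs⟩ : Fin n) ∈ Finset.univ.filter
      (fun i : Fin n => blockMin (pms n m s) i = (i : ℕ)) := by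
    simp only [Finset.mem_filter, Finset.mem_univ, true_and]
    exact blockMin_pms_class hm hs _ (Or.inl rfl)
  rw [Finset.sum_eq_single_of_mem _ hmem]
  · rw [blockMax_pms_class hm hs _ (Or.inl rfl)]
  · intro i hi' hne
    simp only [Finset.mem_filter, Finset.mem_univ, true_and] at hi'
    by_cases hi : (i:ℕ) = m ∨ s ≤ (i:ℕ)
    · rcases hi with hi | hi
      · exact absurd (Fin.ext hi) hne
      · rw [blockMin_pms_class hm hs i (Or.inr hi)] at hi'
        omega
    · rw [blockMax_pms_single i hi]; omega

lemma blockMax_P0 {n : ℕ} (i : Fin n) : blockMax (P0 n) i = (i:ℕ) := by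
  apply le_antisymm
  · have himem : (i:ℕ) ∈ {j : ℕ | ∃ h : j < n, (P0 n).r ⟨j, h⟩ i} :=
      ⟨i.2, (P0 n).refl _⟩
    apply csSup_le ⟨(i:ℕ), himem⟩
    rintro j ⟨hj, hrj⟩
    exact le_of_eq (P0_r.mp hrj)
  · exact le_csSup ⟨n, fun j hj => le_of_lt hj.1⟩ ⟨i.2, (P0 n).refl _⟩

lemma spread_P0 {n : ℕ} : spread (P0 n) = 0 := by
  unfold spread
  apply Finset.sum_eq_zero
  intro i _
  rw [blockMax_P0]; omega

lemma pms_prop {n m s : ℕ} (hm : m < s) :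
    ∀ x y z : Fin n, x < y → y < z → (pms n m s).r x y → (pms n m s).r x z := by
  intro x y z hxy hyz hrxy
  rw [pms_r] at *
  have hvxy : (x:ℕ) < (y:ℕ) := hxy
  have hvyz : (y:ℕ) < (z:ℕ) := hyz
  by_cases hx : (x:ℕ) = m ∨ s ≤ (x:ℕ)
  · have hfx : pf n m s x = m := (pf_eq_m_iff hm x).mpr hx
    have hfy : pf n m s y = m := by rw [← hrxy, hfx]
    have hy := (pf_eq_m_iff hm y).mp hfy
    have hz : s ≤ (z:ℕ) := by
      rcases hy with hy | hy
      · rcases hx with hx | hx <;> omega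
      · omega
    rw [hfx, (pf_eq_m_iff hm z).mpr (Or.inr hz)]
  · have hfx : pf n m s x = (x:ℕ) := by unfold pf; rw [if_neg hx]
    by_cases hy : (y:ℕ) = m ∨ s ≤ (y:ℕ)
    · have hfy : pf n m s y = m := (pf_eq_m_iff hm y).mpr hy
      rw [hfx, hfy] at hrxy; exact absurd hrxy (by tauto)
    · have hfy : pf n m s y = (y:ℕ) := by unfold pf; rw [if_neg hy]
      rw [hfx, hfy] at hrxy; omega

lemma P0_prop {n : ℕ} :
    ∀ x y z : Fin n, x < y → y < z → (P0 n).r x y → (P0 n).r x z := by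
  intro x y z hxy _ hrxy
  exact absurd (Fin.ext hrxy) (ne_of_lt hxy)

lemma classify {n : ℕ} (P : SetPartition n)
    (H : ∀ x y z : Fin n, x < y → y < z → P.r x y → P.r x z) :
    P = P0 n ∨ ∃ m s : ℕ, m < s ∧ s < n ∧ P = pms n m s := by
  by_cases htriv : ∀ a b : Fin n, P.r a b → a = b
  · left
    apply Setoid.ext; intro a b
    exact ⟨fun h => by rw [htriv a b h], fun h => by rw [Fin.ext h]⟩
  · right
    push_neg at htriv
    obtain ⟨a, b, hab, hne⟩ := htriv
    have hW : ∃ j : ℕ, ∃ h : j < n, ∃ x : Fin n, x < ⟨j, h⟩ ∧ P.r x ⟨j, h⟩ := by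
      rcases lt_or_gt_of_ne hne with h | h
      · exact ⟨b, b.2, a, h, hab⟩
      · exact ⟨a, a.2, b, h, P.symm hab⟩
    set W : Set ℕ := {j : ℕ | ∃ h : j < n, ∃ x : Fin n, x < ⟨j, h⟩ ∧ P.r x ⟨j, h⟩} with hWdef
    have hWne : W.Nonempty := hW
    obtain ⟨hsn, mF, hms, hrms⟩ := Nat.sInf_mem hWne
    set s := sInf W
    set sF : Fin n := ⟨s, hsn⟩
    have hmlt : (mF:ℕ) < s := hms
    have F1 : ∀ x : Fin n, s ≤ (x:ℕ) → P.r mF x := by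
      intro x hx
      rcases eq_or_lt_of_le hx with hx | hx
      · have : x = sF := Fin.ext hx.symm
        rw [this]; exact hrms
      · exact H mF sF x hms hx hrms
    have F2 : ∀ x y : Fin n, x < y → P.r x y → s ≤ (y:ℕ) :=
      fun x y hxy hr => Nat.sInf_le ⟨y.2, x, hxy, by exact hr⟩
    have F3 : ∀ x y : Fin n, x < y → P.r x y →
        ((x:ℕ) = (mF:ℕ) ∨ s ≤ (x:ℕ)) := by
      intro x y hxy hr
      have hys : s ≤ (y:ℕ) := F2 x y hxy hr
      have hrxm : P.r x mF := P.trans hr (P.symm (F1 y hys))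
      by_cases hxm : x = mF
      · exact Or.inl (by rw [hxm])
      · rcases lt_or_gt_of_ne hxm with h | h
        · exact absurd (F2 x mF h hrxm) (by omega)
        · exact Or.inr (F2 mF x h (P.symm hrxm))
    refine ⟨(mF:ℕ), s, hmlt, hsn, ?_⟩
    apply Setoid.ext; intro x y
    show P.r x y ↔ (pms n (mF:ℕ) s).r x y
    rw [pms_r]
    have hclass : ∀ x : Fin n, ((x:ℕ) = (mF:ℕ) ∨ s ≤ (x:ℕ)) → P.r mF x := by
      intro x hx
      rcases hx with hx | hx
      · rw [Fin.ext hx.symm]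
      · exact F1 x hx
    constructor
    · intro hr
      by_cases hxy : x = y
      · exact congrArg _ hxy
      · rcases lt_or_gt_of_ne hxy with h | h
        · have hx := F3 x y h hr
          have hy : s ≤ (y:ℕ) := F2 x y h hr
          rw [(pf_eq_m_iff hmlt x).mpr hx, (pf_eq_m_iff hmlt y).mpr (Or.inr hy)]
        · have hy := F3 y x h (P.symm hr)
          have hx : s ≤ (x:ℕ) := F2 y x h (P.symm hr)
          rw [(pf_eq_m_iff hmlt x).mpr (Or.inr hx), (pf_eq_m_iff hmlt y).mpr hy]
    · intro hf
      by_cases hx : (x:ℕ) = (mF:ℕ) ∨ s ≤ (x:ℕ)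
      · have hfx : pf n (mF:ℕ) s x = (mF:ℕ) := (pf_eq_m_iff hmlt x).mpr hx
        have hfy : pf n (mF:ℕ) s y = (mF:ℕ) := by rw [← hf, hfx]
        have hy := (pf_eq_m_iff hmlt y).mp hfy
        exact P.trans (P.symm (hclass x hx)) (hclass y hy)
      · have hfx : pf n (mF:ℕ) s x = (x:ℕ) := by unfold pf; rw [if_neg hx]
        by_cases hy : (y:ℕ) = (mF:ℕ) ∨ s ≤ (y:ℕ)
        · have hfy : pf n (mF:ℕ) s y = (mF:ℕ) := (pf_eq_m_iff hmlt y).mpr hy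
          rw [hfx, hfy] at hf
          exact absurd (Or.inl hf) hx
        · have hfy : pf n (mF:ℕ) s y = (y:ℕ) := by unfold pf; rw [if_neg hy]
          rw [hfx, hfy] at hf
          rw [Fin.ext hf]


/-- the joint generating function over `Π_n(12/3)`. -/
theorem SB_12_3 (n : ℕ) (hn : 1 ≤ n) (q t : ℚ) :
    SB n p12_3 q t =
      t ^ n + ∑ i ∈ Finset.Icc 1 (n - 1), t ^ i * q ^ (n - i) * ∑ j ∈ Finset.range i, q ^ j := by
  classical
  unfold SB
  set T := (Finset.range n).sigma (fun s => Finset.range s) with hT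
  set e : ((_ : ℕ) × ℕ) → SetPartition n := fun p => pms n p.2 p.1 with he
  have hA : Finset.univ.filter (fun P : SetPartition n => SPAvoids P p12_3)
      = insert (P0 n) (T.image e) := by
    ext P
    simp only [Finset.mem_filter, Finset.mem_univ, true_and, Finset.mem_insert,
      Finset.mem_image, hT, Finset.mem_sigma, Finset.mem_range]
    rw [avoids_iff]
    constructor
    · intro H
      rcases classify P H with h | ⟨m, s, hm, hs, h⟩
      · exact Or.inl h
      · exact Or.inr ⟨⟨s, m⟩, ⟨hs, hm⟩, h.symm⟩
    · rintro (rfl | ⟨⟨s, m⟩, ⟨hs, hm⟩, rfl⟩)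
      · exact P0_prop
      · exact pms_prop hm
  rw [hA]
  have hP0notmem : P0 n ∉ T.image e := by
    intro h
    simp only [Finset.mem_image, hT, Finset.mem_sigma, Finset.mem_range] at h
    obtain ⟨⟨s, m⟩, ⟨hs, hm⟩, h⟩ := h
    have h2 := blockNum_pms hm hs
    rw [show pms n m s = e ⟨s, m⟩ from rfl, h, blockNum_P0] at h2
    omega
  rw [Finset.sum_insert hP0notmem, spread_P0, blockNum_P0, pow_zero, one_mul]
  congr 1
  have hinj : ∀ p ∈ T, ∀ p' ∈ T, e p = e p' → p = p' := by
    rintro ⟨s, m⟩ hp ⟨s', m'⟩ hp' hee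
    simp only [hT, Finset.mem_sigma, Finset.mem_range] at hp hp'
    have h1 : blockNum (e ⟨s, m⟩) = blockNum (e ⟨s', m'⟩) := by rw [hee]
    have h2 : spread (e ⟨s, m⟩) = spread (e ⟨s', m'⟩) := by rw [hee]
    rw [show e ⟨s, m⟩ = pms n m s from rfl, show e ⟨s', m'⟩ = pms n m' s' from rfl] at h1 h2
    rw [blockNum_pms hp.2 hp.1, blockNum_pms hp'.2 hp'.1] at h1
    rw [spread_pms hp.2 hp.1, spread_pms hp'.2 hp'.1] at h2
    obtain rfl : s = s' := h1
    obtain rfl : m = m' := by omega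
    rfl
  rw [Finset.sum_image hinj, hT, Finset.sum_sigma]
  have hterm : ∀ s ∈ Finset.range n, (∑ m ∈ Finset.range s,
      q ^ spread (e ⟨s, m⟩) * t ^ blockNum (e ⟨s, m⟩)) =
      ∑ m ∈ Finset.range s, q ^ (n - 1 - m) * t ^ s := by
    intro s hs
    apply Finset.sum_congr rfl
    intro m hm
    simp only [Finset.mem_range] at hs hm
    rw [show e ⟨s, m⟩ = pms n m s from rfl, spread_pms hm hs, blockNum_pms hm hs]
  rw [Finset.sum_congr rfl hterm]
  have hrange : Finset.range n = insert 0 (Finset.Icc 1 (n - 1)) := by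
    ext s; simp only [Finset.mem_insert, Finset.mem_Icc, Finset.mem_range]; omega
  rw [hrange, Finset.sum_insert (by simp)]
  simp only [Finset.range_zero, Finset.sum_empty, zero_add]
  apply Finset.sum_congr rfl
  intro s hs
  simp only [Finset.mem_Icc] at hs
  rw [← Finset.sum_range_reflect (fun m => q ^ (n - 1 - m) * t ^ s) s, Finset.mul_sum]
  apply Finset.sum_congr rfl
  intro j hj
  simp only [Finset.mem_range] at hj
  rw [show n - 1 - (s - 1 - j) = (n - s) + j by omega, pow_add]
  ring

end
end

section
/- There is a bijection τ: R_n(1/23) → R_n(12/3) between the RGFs of partitions of [n] avoiding 1/23 and those avoiding 12/3 which preserves both the spread and block statistics; in particular SB_n(1/23; q,t) = SB_n(12/3; q,t). -/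
open scoped Classical
noncomputable section

/-- The largest letter of a word. -/
def maxLetter {n : ℕ} (w : Fin n → ℕ) : ℕ := Finset.univ.sup w

/-- The (0-based) index of the first occurrence of the letter `l` in `w`. -/
def firstIdx {n : ℕ} (w : Fin n → ℕ) (l : ℕ) : ℕ := sInf {i : ℕ | ∃ h : i < n, w ⟨i, h⟩ = l}

/-- The (0-based) index of the last occurrence of the letter `l` in `w`. -/
def lastIdx {n : ℕ} (w : Fin n → ℕ) (l : ℕ) : ℕ := sSup {i : ℕ | ∃ h : i < n, w ⟨i, h⟩ = l}

/-- The spread of a word. -/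
def spreadW {n : ℕ} (w : Fin n → ℕ) : ℕ :=
  ∑ l ∈ Finset.Icc 1 (maxLetter w), (lastIdx w l - firstIdx w l)

/-- The set of RGFs of partitions of `[n]` avoiding the pattern `Q`. -/
def RSet {k : ℕ} (n : ℕ) (Q : SetPartition k) : Set (Fin n → ℕ) :=
  {w | ∃ P : SetPartition n, SPAvoids P Q ∧ rgf P = w}

-- auxiliary development
namespace SPAux

variable {n : ℕ} (P : SetPartition n)

def bset (i : Fin n) : Set ℕ := {j : ℕ | ∃ h : j < n, P.r ⟨j, h⟩ i}

lemma bset_nonempty (i : Fin n) : (bset P i).Nonempty := ⟨i.1, i.2, P.iseqv.refl i⟩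

lemma bset_bdd (i : Fin n) : BddAbove (bset P i) := ⟨n, fun _ hj => hj.choose.le⟩

lemma blockMin_mem (i : Fin n) : blockMin P i ∈ bset P i := Nat.sInf_mem (bset_nonempty P i)

lemma blockMin_lt (i : Fin n) : blockMin P i < n := (blockMin_mem P i).choose

lemma blockMin_rel (i : Fin n) : P.r ⟨blockMin P i, blockMin_lt P i⟩ i :=
  (blockMin_mem P i).choose_spec

lemma blockMax_mem (i : Fin n) : blockMax P i ∈ bset P i :=
  Nat.sSup_mem (bset_nonempty P i) (bset_bdd P i)

lemma blockMax_lt (i : Fin n) : blockMax P i < n := (blockMax_mem P i).choose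

lemma blockMax_rel (i : Fin n) : P.r ⟨blockMax P i, blockMax_lt P i⟩ i :=
  (blockMax_mem P i).choose_spec

lemma blockMin_le (i : Fin n) : blockMin P i ≤ (i : ℕ) :=
  Nat.sInf_le ⟨i.2, P.iseqv.refl i⟩

lemma le_blockMax (i : Fin n) : (i : ℕ) ≤ blockMax P i :=
  le_csSup (bset_bdd P i) ⟨i.2, P.iseqv.refl i⟩

lemma blockMin_le_blockMax (i : Fin n) : blockMin P i ≤ blockMax P i :=
  (blockMin_le P i).trans (le_blockMax P i)

lemma bset_congr {i j : Fin n} (h : P.r i j) : bset P i = bset P j := by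
  ext k
  exact ⟨fun ⟨hk, hr⟩ => ⟨hk, P.iseqv.trans hr h⟩,
    fun ⟨hk, hr⟩ => ⟨hk, P.iseqv.trans hr (P.iseqv.symm h)⟩⟩

lemma blockMin_congr {i j : Fin n} (h : P.r i j) : blockMin P i = blockMin P j := by
  unfold blockMin; rw [show {j_1 : ℕ | ∃ h : j_1 < n, P.r ⟨j_1, h⟩ i} = bset P i from rfl,
    show {j_1 : ℕ | ∃ h : j_1 < n, P.r ⟨j_1, h⟩ j} = bset P j from rfl, bset_congr P h]

lemma blockMax_congr {i j : Fin n} (h : P.r i j) : blockMax P i = blockMax P j := by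
  unfold blockMax; rw [show {j_1 : ℕ | ∃ h : j_1 < n, P.r ⟨j_1, h⟩ i} = bset P i from rfl,
    show {j_1 : ℕ | ∃ h : j_1 < n, P.r ⟨j_1, h⟩ j} = bset P j from rfl, bset_congr P h]

lemma rel_of_blockMin_eq {i j : Fin n} (h : blockMin P i = blockMin P j) : P.r i j := by
  have e : (⟨blockMin P i, blockMin_lt P i⟩ : Fin n) = ⟨blockMin P j, blockMin_lt P j⟩ :=
    Fin.ext h
  refine P.iseqv.trans (P.iseqv.symm (blockMin_rel P i)) ?_
  rw [e]; exact blockMin_rel P j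

lemma rel_of_blockMax_eq {i j : Fin n} (h : blockMax P i = blockMax P j) : P.r i j := by
  have e : (⟨blockMax P i, blockMax_lt P i⟩ : Fin n) = ⟨blockMax P j, blockMax_lt P j⟩ :=
    Fin.ext h
  refine P.iseqv.trans (P.iseqv.symm (blockMax_rel P i)) ?_
  rw [e]; exact blockMax_rel P j

def mins : Finset (Fin n) := Finset.univ.filter (fun j : Fin n => blockMin P j = (j : ℕ))

def maxs : Finset (Fin n) := Finset.univ.filter (fun j : Fin n => blockMax P j = (j : ℕ))

lemma mem_mins {j : Fin n} : j ∈ mins P ↔ blockMin P j = (j : ℕ) := by simp [mins]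

lemma mem_maxs {j : Fin n} : j ∈ maxs P ↔ blockMax P j = (j : ℕ) := by simp [maxs]

lemma min_elt_mem (i : Fin n) : (⟨blockMin P i, blockMin_lt P i⟩ : Fin n) ∈ mins P := by
  rw [mem_mins]
  exact blockMin_congr P (blockMin_rel P i)

lemma max_elt_mem (i : Fin n) : (⟨blockMax P i, blockMax_lt P i⟩ : Fin n) ∈ maxs P := by
  rw [mem_maxs]
  exact blockMax_congr P (blockMax_rel P i)

lemma rgf_lt_of_min_lt {i j : Fin n} (h : blockMin P i < blockMin P j) : rgf P i < rgf P j := by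
  apply Finset.card_lt_card
  constructor
  · intro x hx
    simp only [Finset.mem_filter] at hx ⊢
    exact ⟨hx.1, hx.2.1, hx.2.2.trans h.le⟩
  · intro hsub
    have hmem : (⟨blockMin P j, blockMin_lt P j⟩ : Fin n) ∈
        Finset.univ.filter (fun k : Fin n => blockMin P k = (k : ℕ) ∧ (k : ℕ) ≤ blockMin P j) := by
      simp only [Finset.mem_filter, Finset.mem_univ, true_and]
      exact ⟨(mem_mins P).1 (min_elt_mem P j), le_refl _⟩
    have := hsub hmem
    simp only [Finset.mem_filter, Finset.mem_univ, true_and] at this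
    omega

lemma rgf_eq_iff (i j : Fin n) : rgf P i = rgf P j ↔ P.r i j := by
  constructor
  · intro h
    rcases lt_trichotomy (blockMin P i) (blockMin P j) with hlt | heq | hgt
    · exact absurd h (rgf_lt_of_min_lt P hlt).ne
    · exact rel_of_blockMin_eq P heq
    · exact absurd h.symm (rgf_lt_of_min_lt P hgt).ne
  · intro h
    unfold rgf
    rw [blockMin_congr P h]

lemma one_le_rgf (i : Fin n) : 1 ≤ rgf P i := by
  refine Finset.card_pos.2 ⟨⟨blockMin P i, blockMin_lt P i⟩, ?_⟩
  simp only [Finset.mem_filter, Finset.mem_univ, true_and]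
  exact ⟨(mem_mins P).1 (min_elt_mem P i), le_refl _⟩

lemma rgf_le (i : Fin n) : rgf P i ≤ (mins P).card := by
  apply Finset.card_le_card
  intro x hx
  simp only [Finset.mem_filter, Finset.mem_univ, true_and] at hx
  exact (mem_mins P).2 hx.1

lemma rgf_inj {P Q : SetPartition n} (h : rgf P = rgf Q) : P = Q := by
  apply Setoid.ext
  intro a b
  rw [← rgf_eq_iff P, ← rgf_eq_iff Q, h]

lemma maxLetter_rgf : Finset.univ.sup (rgf P) = (mins P).card := by
  rcases Nat.eq_zero_or_pos n with hn | hn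
  · subst hn
    simp [mins]
  · apply le_antisymm
    · exact Finset.sup_le fun i _ => rgf_le P i
    · have hne : (mins P).Nonempty := ⟨_, min_elt_mem P ⟨0, hn⟩⟩
      set m := (mins P).max' hne with hm
      have hmm : m ∈ mins P := (mins P).max'_mem hne
      have hval : rgf P m = (mins P).card := by
        unfold rgf
        congr 1
        apply Finset.ext
        intro x
        simp only [Finset.mem_filter, Finset.mem_univ, true_and, mem_mins]
        constructor
        · intro hx; exact hx.1
        · intro hx
          refine ⟨hx, ?_⟩
          rw [(mem_mins P).1 hmm]
          exact_mod_cast Finset.le_max' _ _ ((mem_mins P).2 hx)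
      calc (mins P).card = rgf P m := hval.symm
        _ ≤ _ := Finset.le_sup (Finset.mem_univ m)

lemma card_mins_eq_blockNum : (mins P).card = blockNum P := by
  unfold blockNum
  apply Finset.card_bij (fun i _ => Quotient.mk P i)
  · intro a _; exact Finset.mem_image.2 ⟨a, Finset.mem_univ a, rfl⟩
  · intro a ha b hb hab
    have hr : P.r a b := Quotient.exact hab
    have := blockMin_congr P hr
    rw [(mem_mins P).1 ha, (mem_mins P).1 hb] at this
    exact Fin.ext this
  · intro b hb
    obtain ⟨k, _, rfl⟩ := Finset.mem_image.1 hb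
    exact ⟨⟨blockMin P k, blockMin_lt P k⟩, min_elt_mem P k,
      Quotient.sound (blockMin_rel P k)⟩

lemma card_maxs_eq_card_mins : (maxs P).card = (mins P).card := by
  apply Finset.card_bij (fun i _ => (⟨blockMin P i, blockMin_lt P i⟩ : Fin n))
  · intro a _; exact min_elt_mem P a
  · intro a ha b hb hab
    have : blockMin P a = blockMin P b := congrArg Fin.val hab
    have hr := rel_of_blockMin_eq P this
    have := blockMax_congr P hr
    rw [(mem_maxs P).1 ha, (mem_maxs P).1 hb] at this
    exact Fin.ext this
  · intro b hb
    refine ⟨⟨blockMax P b, blockMax_lt P b⟩, max_elt_mem P b, ?_⟩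
    apply Fin.ext
    show blockMin P _ = (b : ℕ)
    rw [blockMin_congr P (blockMax_rel P b), (mem_mins P).1 hb]

lemma spread_eq_sum_maxs :
    ∑ j ∈ maxs P, ((j : ℕ) - blockMin P j) = spread P := by
  unfold spread
  rw [show Finset.univ.filter (fun i : Fin n => blockMin P i = (i : ℕ)) = mins P from rfl]
  symm
  apply Finset.sum_bij (fun (i : Fin n) (_ : i ∈ mins P) => (⟨blockMax P i, blockMax_lt P i⟩ : Fin n))
  · intro a _; exact max_elt_mem P a
  · intro a ha b hb hab
    have : blockMax P a = blockMax P b := congrArg Fin.val hab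
    have hr := rel_of_blockMax_eq P this
    have := blockMin_congr P hr
    rw [(mem_mins P).1 ha, (mem_mins P).1 hb] at this
    exact Fin.ext this
  · intro b hb
    refine ⟨⟨blockMin P b, blockMin_lt P b⟩, min_elt_mem P b, ?_⟩
    apply Fin.ext
    show blockMax P _ = (b : ℕ)
    rw [blockMax_congr P (blockMin_rel P b), (mem_maxs P).1 hb]
  · intro a ha
    show blockMax P a - (a : ℕ) = (blockMax P a : ℕ) - blockMin P ⟨blockMax P a, _⟩
    rw [blockMin_congr P (blockMax_rel P a), (mem_mins P).1 ha]

end SPAux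

namespace SPAux
variable {n : ℕ} (P : SetPartition n)

lemma firstIdx_rgf (i : Fin n) : firstIdx (rgf P) (rgf P i) = blockMin P i := by
  unfold firstIdx blockMin
  congr 1
  ext k
  simp only [Set.mem_setOf_eq]
  exact ⟨fun ⟨h, hr⟩ => ⟨h, (rgf_eq_iff P _ _).1 hr⟩, fun ⟨h, hr⟩ => ⟨h, (rgf_eq_iff P _ _).2 hr⟩⟩

lemma lastIdx_rgf (i : Fin n) : lastIdx (rgf P) (rgf P i) = blockMax P i := by
  unfold lastIdx blockMax
  congr 1
  ext k
  simp only [Set.mem_setOf_eq]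
  exact ⟨fun ⟨h, hr⟩ => ⟨h, (rgf_eq_iff P _ _).1 hr⟩, fun ⟨h, hr⟩ => ⟨h, (rgf_eq_iff P _ _).2 hr⟩⟩

lemma maxLetter_rgf' : maxLetter (rgf P) = blockNum P := by
  rw [show maxLetter (rgf P) = Finset.univ.sup (rgf P) from rfl, maxLetter_rgf,
    card_mins_eq_blockNum]

lemma spreadW_rgf : spreadW (rgf P) = spread P := by
  unfold spreadW
  rw [show maxLetter (rgf P) = Finset.univ.sup (rgf P) from rfl, maxLetter_rgf]
  unfold spread
  rw [show Finset.univ.filter (fun i : Fin n => blockMin P i = (i : ℕ)) = mins P from rfl]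
  symm
  apply Finset.sum_bij (fun (a : Fin n) (_ : a ∈ mins P) => rgf P a)
  · intro a _
    rw [Finset.mem_Icc]
    exact ⟨one_le_rgf P a, rgf_le P a⟩
  · intro a ha b hb hab
    have hr := (rgf_eq_iff P a b).1 hab
    have := blockMin_congr P hr
    rw [(mem_mins P).1 ha, (mem_mins P).1 hb] at this
    exact Fin.ext this
  · intro b hb
    have := Finset.surj_on_of_inj_on_of_card_le (s := mins P)
      (t := Finset.Icc 1 (mins P).card) (fun a _ => rgf P a)
      (fun a _ => by rw [Finset.mem_Icc]; exact ⟨one_le_rgf P a, rgf_le P a⟩)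
      (fun a b ha hb hab => by
        have hr := (rgf_eq_iff P a b).1 hab
        have := blockMin_congr P hr
        rw [(mem_mins P).1 ha, (mem_mins P).1 hb] at this
        exact Fin.ext this)
      (by rw [Nat.card_Icc]; omega)
    obtain ⟨a, ha, hab⟩ := this b hb
    exact ⟨a, ha, hab.symm⟩
  · intro a ha
    rw [firstIdx_rgf, lastIdx_rgf, (mem_mins P).1 ha]

/-! ### reversal -/

def rv (P : SetPartition n) : SetPartition n := Setoid.comap Fin.rev P

lemma rv_rel (a b : Fin n) : (rv P).r a b ↔ P.r a.rev b.rev := Iff.rfl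

lemma rv_rv : rv (rv P) = P := by
  apply Setoid.ext
  intro a b
  rw [rv_rel, rv_rel, Fin.rev_rev, Fin.rev_rev]

lemma blockMin_rv (i : Fin n) : blockMin (rv P) i = n - 1 - blockMax P i.rev := by
  have hb := blockMax_lt P i.rev
  apply le_antisymm
  · apply Nat.sInf_le
    refine ⟨by omega, ?_⟩
    show P.r (Fin.rev ⟨n - 1 - blockMax P i.rev, by omega⟩) i.rev
    have : Fin.rev (⟨n - 1 - blockMax P i.rev, by omega⟩ : Fin n) =
        ⟨blockMax P i.rev, hb⟩ := by
      apply Fin.ext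
      rw [Fin.val_rev]
      simp only
      omega
    rw [this]
    exact blockMax_rel P i.rev
  · apply le_csInf (bset_nonempty (rv P) i)
    intro j hj
    obtain ⟨hjn, hr⟩ := hj
    have hr' : P.r (Fin.rev ⟨j, hjn⟩) i.rev := hr
    have hmem : (n - 1 - j) ∈ bset P i.rev := by
      refine ⟨by omega, ?_⟩
      have : (⟨n - 1 - j, by omega⟩ : Fin n) = Fin.rev ⟨j, hjn⟩ := by
        apply Fin.ext
        rw [Fin.val_rev]
        simp only
        omega
      rw [this]
      exact hr'
    have h2 : n - 1 - j ≤ blockMax P i.rev := le_csSup (bset_bdd P i.rev) hmem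
    omega

lemma blockMax_rv (i : Fin n) : blockMax (rv P) i = n - 1 - blockMin P i.rev := by
  have hm := blockMin_lt P i.rev
  apply le_antisymm
  · apply csSup_le (bset_nonempty (rv P) i)
    intro j hj
    obtain ⟨hjn, hr⟩ := hj
    have hr' : P.r (Fin.rev ⟨j, hjn⟩) i.rev := hr
    have hmem : (n - 1 - j) ∈ bset P i.rev := by
      refine ⟨by omega, ?_⟩
      have : (⟨n - 1 - j, by omega⟩ : Fin n) = Fin.rev ⟨j, hjn⟩ := by
        apply Fin.ext
        rw [Fin.val_rev]
        simp only
        omega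
      rw [this]
      exact hr'
    have h2 : blockMin P i.rev ≤ n - 1 - j := Nat.sInf_le hmem
    omega
  · apply le_csSup (bset_bdd (rv P) i)
    refine ⟨by omega, ?_⟩
    show P.r (Fin.rev ⟨n - 1 - blockMin P i.rev, by omega⟩) i.rev
    have : Fin.rev (⟨n - 1 - blockMin P i.rev, by omega⟩ : Fin n) =
        ⟨blockMin P i.rev, hm⟩ := by
      apply Fin.ext
      rw [Fin.val_rev]
      simp only
      omega
    rw [this]
    exact blockMin_rel P i.rev

lemma mem_mins_rv {i : Fin n} : i ∈ mins (rv P) ↔ i.rev ∈ maxs P := by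
  rw [mem_mins, mem_maxs, blockMin_rv, Fin.val_rev]
  have h1 := blockMax_lt P i.rev
  have h2 := i.2
  omega

lemma spread_rv : spread (rv P) = spread P := by
  rw [← spread_eq_sum_maxs P]
  unfold spread
  rw [show Finset.univ.filter (fun i : Fin n => blockMin (rv P) i = (i : ℕ)) = mins (rv P)
    from rfl]
  apply Finset.sum_bij (fun (a : Fin n) (_ : a ∈ mins (rv P)) => a.rev)
  · intro a ha; exact (mem_mins_rv P).1 ha
  · intro a _ b _ hab
    exact Fin.rev_injective hab
  · intro b hb
    refine ⟨b.rev, ?_, Fin.rev_rev b⟩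
    rw [mem_mins_rv, Fin.rev_rev]
    exact hb
  · intro a ha
    rw [blockMax_rv]
    have h1 := (mem_mins (rv P)).1 ha
    rw [blockMin_rv] at h1
    have h2 := blockMin_le_blockMax P a.rev
    have h3 := blockMax_lt P a.rev
    have h4 := Fin.val_rev a
    omega

lemma blockNum_rv : blockNum (rv P) = blockNum P := by
  rw [← card_mins_eq_blockNum, ← card_mins_eq_blockNum, ← card_maxs_eq_card_mins P]
  apply Finset.card_bij (fun (a : Fin n) (_ : a ∈ mins (rv P)) => a.rev)
  · intro a ha; exact (mem_mins_rv P).1 ha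
  · intro a _ b _ hab; exact Fin.rev_injective hab
  · intro b hb
    refine ⟨b.rev, ?_, Fin.rev_rev b⟩
    rw [mem_mins_rv, Fin.rev_rev]
    exact hb

lemma contains_rv {m k : ℕ} {P : SetPartition m} {Q : SetPartition k}
    (h : SPContains P Q) : SPContains (rv P) (rv Q) := by
  obtain ⟨f, hmono, hf⟩ := h
  refine ⟨fun a => (f a.rev).rev, ?_, ?_⟩
  · intro a b hab
    have h1 : b.rev < a.rev := Fin.rev_lt_rev.2 hab
    have h2 : f b.rev < f a.rev := hmono h1
    exact Fin.rev_lt_rev.2 h2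
  · intro a b
    rw [rv_rel, rv_rel, Fin.rev_rev, Fin.rev_rev]
    exact hf a.rev b.rev

lemma rv_p1_23 : rv p1_23 = p12_3 := by
  have h : ∀ a b : Fin 3,
      (![(0:ℕ), 1, 1] a.rev = ![(0:ℕ), 1, 1] b.rev) ↔ (![(0:ℕ), 0, 1] a = ![(0:ℕ), 0, 1] b) := by
    decide
  exact Setoid.ext fun a b => h a b

lemma rv_p12_3 : rv p12_3 = p1_23 := by
  rw [← rv_p1_23, rv_rv]

lemma avoid_iff : SPAvoids P p1_23 ↔ SPAvoids (rv P) p12_3 := by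
  unfold SPAvoids
  apply not_congr
  constructor
  · intro h
    have := contains_rv h
    rwa [rv_p1_23] at this
  · intro h
    have := contains_rv h
    rwa [rv_rv, rv_p12_3] at this

end SPAux


namespace SPAux

def tau (n : ℕ) : (Fin n → ℕ) → (Fin n → ℕ) := fun w =>
  if h : ∃ P : SetPartition n, SPAvoids P p1_23 ∧ rgf P = w then rgf (rv h.choose) else w

lemma tau_rgf {n : ℕ} {P : SetPartition n} (hP : SPAvoids P p1_23) :
    tau n (rgf P) = rgf (rv P) := by
  have h : ∃ Q : SetPartition n, SPAvoids Q p1_23 ∧ rgf Q = rgf P := ⟨P, hP, rfl⟩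
  unfold tau
  rw [dif_pos h, rgf_inj h.choose_spec.2]

end SPAux


/-- there is a bijection `τ : R_n(1/23) → R_n(12/3)` preserving spread and
block; in particular the joint generating functions agree. -/
theorem exists_statPreserving_bijection (n : ℕ) :
    (∃ τ : (Fin n → ℕ) → (Fin n → ℕ),
      Set.BijOn τ (RSet n p1_23) (RSet n p12_3) ∧
      ∀ w ∈ RSet n p1_23, spreadW (τ w) = spreadW w ∧ maxLetter (τ w) = maxLetter w) ∧
    ∀ q t : ℚ, SB n p1_23 q t = SB n p12_3 q t := by
  constructor
  · refine ⟨SPAux.tau n, ⟨?_, ?_, ?_⟩, ?_⟩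
    · intro w hw
      obtain ⟨P, hP, rfl⟩ := hw
      rw [SPAux.tau_rgf hP]
      exact ⟨SPAux.rv P, (SPAux.avoid_iff P).1 hP, rfl⟩
    · intro w1 h1 w2 h2 he
      obtain ⟨P1, hP1, rfl⟩ := h1
      obtain ⟨P2, hP2, rfl⟩ := h2
      rw [SPAux.tau_rgf hP1, SPAux.tau_rgf hP2] at he
      have h12 := SPAux.rgf_inj he
      have h12' : P1 = P2 := by
        have := congrArg SPAux.rv h12
        rwa [SPAux.rv_rv, SPAux.rv_rv] at this
      rw [h12']
    · intro v hv
      obtain ⟨Q, hQ, rfl⟩ := hv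
      have hA : SPAvoids (SPAux.rv Q) p1_23 := by
        rw [SPAux.avoid_iff, SPAux.rv_rv]; exact hQ
      refine ⟨rgf (SPAux.rv Q), ⟨SPAux.rv Q, hA, rfl⟩, ?_⟩
      rw [SPAux.tau_rgf hA, SPAux.rv_rv]
    · intro w hw
      obtain ⟨P, hP, rfl⟩ := hw
      rw [SPAux.tau_rgf hP]
      constructor
      · rw [SPAux.spreadW_rgf, SPAux.spreadW_rgf, SPAux.spread_rv]
      · rw [SPAux.maxLetter_rgf', SPAux.maxLetter_rgf', SPAux.blockNum_rv]
  · intro q t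
    unfold SB
    apply Finset.sum_nbij' (i := SPAux.rv) (j := SPAux.rv)
    · intro P hP
      simp only [Finset.mem_filter, Finset.mem_univ, true_and] at hP ⊢
      exact (SPAux.avoid_iff P).1 hP
    · intro P hP
      simp only [Finset.mem_filter, Finset.mem_univ, true_and] at hP ⊢
      rw [SPAux.avoid_iff, SPAux.rv_rv]; exact hP
    · intro P _; exact SPAux.rv_rv P
    · intro P _; exact SPAux.rv_rv P
    · intro P _; rw [SPAux.spread_rv, SPAux.blockNum_rv]


end
end

section
/- The maximum value of the spread statistic over partitions of [n] avoiding the pattern 123 is ⌊n/2⌋·⌈n/2⌉, and any partition achieving this maximum has exactly ⌈n/2⌉ blocks. -/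
open scoped Classical
noncomputable section

namespace SpreadAux

variable {n : ℕ} (P : SetPartition n)

def blockSet (i : Fin n) : Set ℕ := {j : ℕ | ∃ h : j < n, P.r ⟨j, h⟩ i}

lemma mem_blockSet_self (i : Fin n) : (i : ℕ) ∈ blockSet P i :=
  ⟨i.2, by simpa [Fin.eta] using P.iseqv.refl i⟩

lemma blockSet_nonempty (i : Fin n) : (blockSet P i).Nonempty := ⟨i, mem_blockSet_self P i⟩

lemma blockSet_bdd (i : Fin n) : BddAbove (blockSet P i) :=
  ⟨n, fun j hj => hj.1.le⟩

lemma blockMin_mem (i : Fin n) : blockMin P i ∈ blockSet P i :=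
  Nat.sInf_mem (blockSet_nonempty P i)

lemma blockMax_mem (i : Fin n) : blockMax P i ∈ blockSet P i :=
  Nat.sSup_mem (blockSet_nonempty P i) (blockSet_bdd P i)

lemma blockMin_le (i : Fin n) : blockMin P i ≤ (i : ℕ) :=
  Nat.sInf_le (mem_blockSet_self P i)

lemma le_blockMax (i : Fin n) : (i : ℕ) ≤ blockMax P i :=
  le_csSup (blockSet_bdd P i) (mem_blockSet_self P i)

lemma blockMax_lt (i : Fin n) : blockMax P i < n := (blockMax_mem P i).1

lemma blockSet_eq_of_r {i j : Fin n} (h : P.r i j) : blockSet P i = blockSet P j := by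
  ext x
  exact ⟨fun ⟨hx, hr⟩ => ⟨hx, P.iseqv.trans hr h⟩,
    fun ⟨hx, hr⟩ => ⟨hx, P.iseqv.trans hr (P.iseqv.symm h)⟩⟩

lemma blockMin_eq_of_r {i j : Fin n} (h : P.r i j) : blockMin P i = blockMin P j := by
  unfold blockMin
  rw [show {j_1 : ℕ | ∃ h : j_1 < n, P.r ⟨j_1, h⟩ i} = blockSet P i from rfl,
    show {j_1 : ℕ | ∃ h : j_1 < n, P.r ⟨j_1, h⟩ j} = blockSet P j from rfl,
    blockSet_eq_of_r P h]

lemma blockMax_eq_of_r {i j : Fin n} (h : P.r i j) : blockMax P i = blockMax P j := by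
  unfold blockMax
  rw [show {j_1 : ℕ | ∃ h : j_1 < n, P.r ⟨j_1, h⟩ i} = blockSet P i from rfl,
    show {j_1 : ℕ | ∃ h : j_1 < n, P.r ⟨j_1, h⟩ j} = blockSet P j from rfl,
    blockSet_eq_of_r P h]

lemma mem_le_blockMax {i : Fin n} {x : ℕ} (hx : x ∈ blockSet P i) : x ≤ blockMax P i :=
  le_csSup (blockSet_bdd P i) hx

lemma blockMin_le_mem {i : Fin n} {x : ℕ} (hx : x ∈ blockSet P i) : blockMin P i ≤ x :=
  Nat.sInf_le hx

-- consequence of avoidance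
lemma no3 (hA : SPAvoids P p123) :
    ∀ a b c : Fin n, (a : ℕ) < b → (b : ℕ) < c → P.r a b → P.r a c → False := by
  intro a b c hab hbc r1 r2
  apply hA
  refine ⟨![a, b, c], ?_, ?_⟩
  · rw [Fin.strictMono_iff_lt_succ]
    intro t
    fin_cases t <;> simp only [Fin.lt_def] <;> [exact hab; exact hbc]
  · intro x y
    constructor
    · intro _
      fin_cases x <;> fin_cases y <;>
        first
          | exact P.iseqv.refl _
          | exact r1 | exact r2
          | exact P.iseqv.symm r1 | exact P.iseqv.symm r2
          | exact P.iseqv.trans (P.iseqv.symm r1) r2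
          | exact P.iseqv.trans (P.iseqv.symm r2) r1
    · intro _
      show ![0,0,0] x = ![0,0,0] y
      fin_cases x <;> fin_cases y <;> rfl


-- arithmetic lemmas
lemma twice_sum (t : ℕ) : 2 * (∑ i ∈ Finset.range t, i) + t = t * t := by
  induction t with
  | zero => simp
  | succ k ih =>
    rw [Finset.sum_range_succ]
    ring_nf
    ring_nf at ih
    nlinarith [ih]

lemma sum_range_lb : ∀ (m : ℕ) (s : Finset ℕ), s.card = m →
    ∑ i ∈ Finset.range m, i ≤ ∑ x ∈ s, x := by
  intro m
  induction m with
  | zero => intro s _; simp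
  | succ k ih =>
    intro s hs
    have hne : s.Nonempty := by rw [← Finset.card_pos, hs]; omega
    have hM : s.max' hne ∈ s := s.max'_mem hne
    set M := s.max' hne with hMdef
    have hsub : s ⊆ Finset.range (M + 1) := fun x hx =>
      Finset.mem_range.2 (Nat.lt_succ_of_le (s.le_max' x hx))
    have hMk : k ≤ M := by
      have := Finset.card_le_card hsub
      rw [hs, Finset.card_range] at this; omega
    have hsum : ∑ x ∈ s, x = M + ∑ x ∈ s.erase M, x := by
      exact (Finset.add_sum_erase s id hM).symm
    have hcard : (s.erase M).card = k := by
      rw [Finset.card_erase_of_mem hM, hs]; omega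
    calc ∑ i ∈ Finset.range (k + 1), i = (∑ i ∈ Finset.range k, i) + k :=
          Finset.sum_range_succ _ k
      _ ≤ (∑ x ∈ s.erase M, x) + M := add_le_add (ih _ hcard) hMk
      _ = ∑ x ∈ s, x := by rw [hsum]; ring

lemma sum_ub (n : ℕ) (s : Finset ℕ) (hs : s ⊆ Finset.range n) :
    (∑ x ∈ s, x) + ∑ i ∈ Finset.range (n - s.card), i ≤ ∑ i ∈ Finset.range n, i := by
  have h1 : (∑ x ∈ Finset.range n \ s, x) + ∑ x ∈ s, x = ∑ x ∈ Finset.range n, x :=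
    Finset.sum_sdiff hs
  have h2 : (Finset.range n \ s).card = n - s.card := by
    rw [Finset.card_sdiff_of_subset hs, Finset.card_range]
  have h3 := sum_range_lb _ (Finset.range n \ s) h2
  omega

lemma arith (n m a b : ℕ) (h2m : 2 * m ≤ n)
    (ha : ∑ i ∈ Finset.range m, i ≤ a)
    (hb : b + ∑ i ∈ Finset.range (n - m), i ≤ ∑ i ∈ Finset.range n, i) :
    b - a ≤ m * (n - m) := by
  set u := n - m with hu
  have hn : n = m + u := by omega
  have t1 := twice_sum n
  have t2 := twice_sum m
  have t3 := twice_sum u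
  have key : n * n = m * m + 2 * (m * u) + u * u := by rw [hn]; ring
  have : b ≤ m * u + a := by nlinarith [t1, t2, t3, key, ha, hb]
  omega

lemma part4 (n m u : ℕ) (h : m + u = n) (h2 : 2 * m ≤ n) :
    m * u ≤ n / 2 * ((n + 1) / 2) ∧ (m * u = n / 2 * ((n + 1) / 2) → m = n / 2) := by
  set k := n / 2 with hk
  set k' := (n + 1) / 2 with hk'
  have hkk' : k + k' = n := by omega
  have hmk : m ≤ k := by omega
  have hkle : k ≤ k' := by omega
  obtain ⟨d, hd⟩ : ∃ d, k = m + d := ⟨k - m, by omega⟩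
  have hud : u = k' + d := by omega
  have hd2 : m * d ≤ d * k' := by
    calc m * d = d * m := by ring
      _ ≤ d * k' := Nat.mul_le_mul_left d (by omega)
  constructor
  · calc m * u = m * k' + m * d := by rw [hud]; ring
      _ ≤ m * k' + d * k' := by omega
      _ = k * k' := by rw [hd]; ring
  · intro heq
    by_contra hne
    have hdpos : 0 < d := by omega
    have : m * d < d * k' := by
      calc m * d = d * m := by ring
        _ < d * k' := Nat.mul_lt_mul_of_pos_left (by omega) hdpos
    have h1 : m * u = m * k' + m * d := by rw [hud]; ring
    have h2' : k * k' = m * k' + d * k' := by rw [hd]; ring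
    omega

lemma gaussA : ∀ k : ℕ, ∑ i ∈ Finset.range k, (2 * k - 1 - 2 * i) = k * k := by
  intro k
  induction k with
  | zero => simp
  | succ j ih =>
    rw [Finset.sum_range_succ']
    have hcong : ∀ i ∈ Finset.range j, 2 * (j + 1) - 1 - 2 * (i + 1) = 2 * j - 1 - 2 * i := by
      intro i _; omega
    rw [Finset.sum_congr rfl hcong, ih]
    have : 2 * (j + 1) - 1 - 2 * 0 = 2 * j + 1 := by omega
    rw [this]
    ring

lemma gaussB : ∀ k : ℕ, ∑ i ∈ Finset.range (k + 1), (2 * k - 2 * i) = k * (k + 1) := by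
  intro k
  induction k with
  | zero => simp
  | succ j ih =>
    rw [Finset.sum_range_succ']
    have hcong : ∀ i ∈ Finset.range (j + 1), 2 * (j + 1) - 2 * (i + 1) = 2 * j - 2 * i := by
      intro i _; omega
    rw [Finset.sum_congr rfl hcong, ih]
    have : 2 * (j + 1) - 2 * 0 = 2 * j + 2 := by omega
    rw [this]
    ring

lemma gaussC (n : ℕ) : ∑ i ∈ Finset.range ((n + 1) / 2), (n - 1 - 2 * i) = n / 2 * ((n + 1) / 2) := by
  rcases Nat.even_or_odd n with ⟨k, hk⟩ | ⟨k, hk⟩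
  · subst hk
    have h1 : (k + k + 1) / 2 = k := by omega
    have h2 : (k + k) / 2 = k := by omega
    rw [h1, h2]
    have hcong : ∀ i ∈ Finset.range k, k + k - 1 - 2 * i = 2 * k - 1 - 2 * i := by
      intro i _; omega
    rw [Finset.sum_congr rfl hcong, gaussA]
  · subst hk
    have h1 : (2 * k + 1 + 1) / 2 = k + 1 := by omega
    have h2 : (2 * k + 1) / 2 = k := by omega
    rw [h1, h2]
    have hcong : ∀ i ∈ Finset.range (k + 1), 2 * k + 1 - 1 - 2 * i = 2 * k - 2 * i := by
      intro i _; omega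
    rw [Finset.sum_congr rfl hcong, gaussB]


lemma pair_struct (hA : SPAvoids P p123) {j : Fin n} (hjmin : blockMin P j = (j : ℕ))
    {x : Fin n} (hr : P.r x j) : (x : ℕ) = (j : ℕ) ∨ (x : ℕ) = blockMax P j := by
  by_contra hc
  push_neg at hc
  obtain ⟨h1, h2⟩ := hc
  have hx_mem : (x : ℕ) ∈ blockSet P j := ⟨x.2, by simpa [Fin.eta] using hr⟩
  have hge : (j : ℕ) ≤ (x : ℕ) := by
    have := blockMin_le_mem P hx_mem; omega
  have hle : (x : ℕ) ≤ blockMax P j := mem_le_blockMax P hx_mem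
  obtain ⟨hlt, hrM⟩ := blockMax_mem P j
  exact no3 P hA j x ⟨blockMax P j, hlt⟩ (by omega)
    (show (x : ℕ) < blockMax P j by omega) (P.iseqv.symm hr) (P.iseqv.symm hrM)

lemma main_ub (P : SetPartition n) (hA : SPAvoids P p123) :
    spread P ≤ n / 2 * ((n + 1) / 2) ∧
      (spread P = n / 2 * ((n + 1) / 2) → blockNum P = (n + 1) / 2) := by
  classical
  set S : Finset (Fin n) := Finset.univ.filter (fun i => blockMin P i = (i : ℕ)) with hS
  set T : Finset (Fin n) := S.filter (fun i => (i : ℕ) < blockMax P i) with hT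
  set m := T.card with hm
  have hmemS : ∀ i : Fin n, i ∈ S ↔ blockMin P i = (i : ℕ) := by
    intro i; rw [hS, Finset.mem_filter]; simp
  have hmemT : ∀ i : Fin n, i ∈ T ↔ (blockMin P i = (i : ℕ) ∧ (i : ℕ) < blockMax P i) := by
    intro i; rw [hT, Finset.mem_filter, hmemS]
  have hspread : spread P = ∑ i ∈ T, (blockMax P i - (i : ℕ)) := by
    rw [hT]
    refine (Finset.sum_filter_of_ne ?_).symm
    intro x _ hfx
    omega
  have hBinj : ∀ i ∈ T, ∀ j ∈ T, blockMax P i = blockMax P j → i = j := by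
    intro i hi j hj heq
    obtain ⟨hi1, hrMi⟩ := blockMax_mem P i
    obtain ⟨hj1, hrMj⟩ := blockMax_mem P j
    have hfe : (⟨blockMax P i, hi1⟩ : Fin n) = ⟨blockMax P j, hj1⟩ := Fin.ext heq
    have hrMj' : P.r (⟨blockMax P i, hi1⟩ : Fin n) j := by rw [hfe]; exact hrMj
    have hrij : P.r i j := P.iseqv.trans (P.iseqv.symm hrMi) hrMj'
    have h1 : blockMin P i = blockMin P j := blockMin_eq_of_r P hrij
    have h2 := (hmemT i).1 hi
    have h3 := (hmemT j).1 hj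
    exact Fin.ext (by omega)
  have hdisjAB : ∀ i ∈ T, ∀ j ∈ T, (i : ℕ) ≠ blockMax P j := by
    intro i hi j hj heq
    obtain ⟨hj1, hrMj⟩ := blockMax_mem P j
    have hfe : (⟨blockMax P j, hj1⟩ : Fin n) = i := Fin.ext heq.symm
    have hrij : P.r i j := by rw [← hfe]; exact hrMj
    have h1 := blockMin_eq_of_r P hrij
    have h2 := (hmemT i).1 hi
    have h3 := (hmemT j).1 hj
    omega
  set A := T.image (fun i : Fin n => (i : ℕ)) with hAdef
  set B := T.image (blockMax P) with hBdef
  have hAcard : A.card = m := Finset.card_image_of_injOn (fun x _ y _ h => Fin.ext h)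
  have hBcard : B.card = m := Finset.card_image_of_injOn hBinj
  have hAsub : A ⊆ Finset.range n := by
    intro x hx
    obtain ⟨i, _, rfl⟩ := Finset.mem_image.1 hx
    exact Finset.mem_range.2 i.2
  have hBsub : B ⊆ Finset.range n := by
    intro x hx
    obtain ⟨i, _, rfl⟩ := Finset.mem_image.1 hx
    exact Finset.mem_range.2 (blockMax_lt P i)
  have hABdisj : Disjoint A B := by
    rw [Finset.disjoint_left]
    intro a ha hb
    obtain ⟨i, hi, rfl⟩ := Finset.mem_image.1 ha
    obtain ⟨j, hj, hj2⟩ := Finset.mem_image.1 hb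
    exact hdisjAB i hi j hj hj2.symm
  have h2m : 2 * m ≤ n := by
    have hc := Finset.card_le_card (Finset.union_subset hAsub hBsub)
    rw [Finset.card_union_of_disjoint hABdisj, Finset.card_range, hAcard, hBcard] at hc
    omega
  have hsumA : ∑ x ∈ A, x = ∑ i ∈ T, (i : ℕ) :=
    Finset.sum_image (fun x _ y _ h => Fin.ext h)
  have hsumB : ∑ x ∈ B, x = ∑ i ∈ T, blockMax P i := Finset.sum_image hBinj
  have hsplit : (∑ i ∈ T, (blockMax P i - (i : ℕ))) + ∑ i ∈ T, (i : ℕ)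
      = ∑ i ∈ T, blockMax P i := by
    rw [← Finset.sum_add_distrib]
    exact Finset.sum_congr rfl (fun i _ => Nat.sub_add_cancel (le_blockMax P i))
  have hlb : ∑ i ∈ Finset.range m, i ≤ ∑ i ∈ T, (i : ℕ) := by
    rw [← hsumA]; exact sum_range_lb m A hAcard
  have hub : (∑ i ∈ T, blockMax P i) + ∑ i ∈ Finset.range (n - m), i
      ≤ ∑ i ∈ Finset.range n, i := by
    rw [← hsumB]
    have := sum_ub n B hBsub
    rw [hBcard] at this
    exact this
  have harith := arith n m (∑ i ∈ T, (i : ℕ)) (∑ i ∈ T, blockMax P i) h2m hlb hub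
  have hs_le : spread P ≤ m * (n - m) := by rw [hspread]; omega
  have hp4 := part4 n m (n - m) (by omega) h2m
  refine ⟨hs_le.trans hp4.1, ?_⟩
  intro heq
  have hmeq : m = n / 2 := hp4.2 (le_antisymm hp4.1 (by omega))
  -- now the number of blocks
  have hSmk : blockNum P = S.card := by
    have himg : Finset.univ.image (fun i : Fin n => Quotient.mk P i)
        = S.image (fun i => Quotient.mk P i) := by
      apply Finset.Subset.antisymm
      · intro q hq
        obtain ⟨i, _, rfl⟩ := Finset.mem_image.1 hq
        obtain ⟨hlt, hr⟩ := blockMin_mem P i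
        refine Finset.mem_image.2 ⟨⟨blockMin P i, hlt⟩, ?_, ?_⟩
        · rw [hmemS]
          exact blockMin_eq_of_r P hr
        · exact Quotient.sound hr
      · exact Finset.image_subset_image (Finset.subset_univ S)
    rw [blockNum, himg]
    apply Finset.card_image_of_injOn
    intro x hx y hy hxy
    have hr : P.r x y := Quotient.exact hxy
    have h1 := blockMin_eq_of_r P hr
    have h2 := (hmemS x).1 hx
    have h3 := (hmemS y).1 hy
    exact Fin.ext (by omega)
  have hScompl : Sᶜ = T.image (fun i => (⟨blockMax P i, blockMax_lt P i⟩ : Fin n)) := by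
    apply Finset.Subset.antisymm
    · intro i hi
      have hi' : blockMin P i ≠ (i : ℕ) := fun h => (Finset.mem_compl.1 hi) ((hmemS i).2 h)
      have hltmin : blockMin P i < (i : ℕ) := lt_of_le_of_ne (blockMin_le P i) hi'
      obtain ⟨hltn, hr⟩ := blockMin_mem P i
      have hminj : blockMin P (⟨blockMin P i, hltn⟩ : Fin n) = blockMin P i :=
        blockMin_eq_of_r P hr
      have hmaxj : blockMax P (⟨blockMin P i, hltn⟩ : Fin n) = blockMax P i :=
        blockMax_eq_of_r P hr
      have hjT : (⟨blockMin P i, hltn⟩ : Fin n) ∈ T := by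
        rw [hmemT]
        constructor
        · exact hminj
        · have := le_blockMax P i
          simp only [hmaxj]
          omega
      refine Finset.mem_image.2 ⟨_, hjT, ?_⟩
      apply Fin.ext
      show blockMax P (⟨blockMin P i, hltn⟩ : Fin n) = (i : ℕ)
      rcases pair_struct P hA hminj (P.iseqv.symm hr) with h | h
      · exfalso
        simp only at h
        omega
      · rw [← h]
    · intro x hx
      obtain ⟨j, hjT, rfl⟩ := Finset.mem_image.1 hx
      apply Finset.mem_compl.2
      rw [hmemS]
      obtain ⟨hlt, hr⟩ := blockMax_mem P j
      have h1 : blockMin P (⟨blockMax P j, blockMax_lt P j⟩ : Fin n) = blockMin P j :=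
        blockMin_eq_of_r P hr
      have h2 := (hmemT j).1 hjT
      simp only [h1]
      omega
  have hcardcompl : Sᶜ.card = m := by
    rw [hScompl]
    apply Finset.card_image_of_injOn
    intro x hx y hy hxy
    exact hBinj x hx y hy (congrArg Fin.val hxy)
  have hcards : S.card + m = n := by
    have h1 := Finset.card_add_card_compl S
    rw [hcardcompl, Fintype.card_fin] at h1
    exact h1
  rw [hSmk]
  omega


def W (n : ℕ) : SetPartition n := Setoid.ker (fun i : Fin n => min (i : ℕ) (n - 1 - (i : ℕ)))

lemma W_r {a b : Fin n} :
    (W n).r a b ↔ min (a : ℕ) (n - 1 - (a : ℕ)) = min (b : ℕ) (n - 1 - (b : ℕ)) := Iff.rfl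

lemma W_blockMin (i : Fin n) : blockMin (W n) i = min (i : ℕ) (n - 1 - (i : ℕ)) := by
  have hin : (i : ℕ) < n := i.2
  apply le_antisymm
  · apply Nat.sInf_le
    refine ⟨by omega, ?_⟩
    show min (min (i : ℕ) (n - 1 - (i : ℕ))) (n - 1 - min (i : ℕ) (n - 1 - (i : ℕ)))
      = min (i : ℕ) (n - 1 - (i : ℕ))
    omega
  · apply le_csInf (blockSet_nonempty _ i)
    intro b hb
    obtain ⟨hbn, hbr⟩ := hb
    have h : min b (n - 1 - b) = min (i : ℕ) (n - 1 - (i : ℕ)) := hbr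
    omega

lemma W_blockMax (i : Fin n) : blockMax (W n) i = max (i : ℕ) (n - 1 - (i : ℕ)) := by
  have hin : (i : ℕ) < n := i.2
  apply le_antisymm
  · apply csSup_le (blockSet_nonempty _ i)
    intro b hb
    obtain ⟨hbn, hbr⟩ := hb
    have h : min b (n - 1 - b) = min (i : ℕ) (n - 1 - (i : ℕ)) := hbr
    omega
  · apply le_csSup (blockSet_bdd _ i)
    refine ⟨by omega, ?_⟩
    show min (max (i : ℕ) (n - 1 - (i : ℕ))) (n - 1 - max (i : ℕ) (n - 1 - (i : ℕ)))
      = min (i : ℕ) (n - 1 - (i : ℕ))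
    omega

lemma W_avoids : SPAvoids (W n) p123 := by
  rintro ⟨f, hmono, hf⟩
  have h01 : (W n).r (f 0) (f 1) := (hf 0 1).1 rfl
  have h02 : (W n).r (f 0) (f 2) := (hf 0 2).1 rfl
  have m01 : f 0 < f 1 := hmono (by decide)
  have m12 : f 1 < f 2 := hmono (by decide)
  rw [W_r] at h01 h02
  have ha : ((f 0 : Fin n) : ℕ) < n := (f 0).2
  have hb : ((f 1 : Fin n) : ℕ) < n := (f 1).2
  have hc : ((f 2 : Fin n) : ℕ) < n := (f 2).2
  have m01' : ((f 0 : Fin n) : ℕ) < (f 1 : Fin n) := m01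
  have m12' : ((f 1 : Fin n) : ℕ) < (f 2 : Fin n) := m12
  omega

lemma W_spread : spread (W n) = n / 2 * ((n + 1) / 2) := by
  have step1 : spread (W n)
      = ∑ i : Fin n, if blockMin (W n) i = (i : ℕ) then blockMax (W n) i - (i : ℕ) else 0 :=
    Finset.sum_filter _ _
  have step2 : (∑ i : Fin n, if blockMin (W n) i = (i : ℕ) then blockMax (W n) i - (i : ℕ) else 0)
      = ∑ i : Fin n, (fun j : ℕ => if 2 * j + 1 ≤ n then n - 1 - 2 * j else 0) (i : ℕ) := by
    apply Finset.sum_congr rfl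
    intro i _
    have hin : (i : ℕ) < n := i.2
    rw [W_blockMin, W_blockMax]
    simp only
    split_ifs with h1 h2 h2 <;> omega
  have step3 : (∑ i : Fin n, (fun j : ℕ => if 2 * j + 1 ≤ n then n - 1 - 2 * j else 0) (i : ℕ))
      = ∑ i ∈ Finset.range n, if 2 * i + 1 ≤ n then n - 1 - 2 * i else 0 := by
    rw [Fin.sum_univ_eq_sum_range (fun j : ℕ => if 2 * j + 1 ≤ n then n - 1 - 2 * j else 0) n]
  have step4 : (∑ i ∈ Finset.range n, if 2 * i + 1 ≤ n then n - 1 - 2 * i else 0)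
      = ∑ i ∈ (Finset.range n).filter (fun i => 2 * i + 1 ≤ n), (n - 1 - 2 * i) :=
    (Finset.sum_filter _ _).symm
  have step5 : (Finset.range n).filter (fun i => 2 * i + 1 ≤ n) = Finset.range ((n + 1) / 2) := by
    ext i
    simp only [Finset.mem_filter, Finset.mem_range]
    omega
  rw [step1, step2, step3, step4, step5, gaussC]

end SpreadAux

/-- the maximum of spread over `Π_n(123)` is `⌊n/2⌋⌈n/2⌉`, and any
partition achieving this maximum has exactly `⌈n/2⌉` blocks. -/
theorem spread_max_123 (n : ℕ) :
    IsGreatest {s : ℕ | ∃ P : SetPartition n, SPAvoids P p123 ∧ spread P = s}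
      (n / 2 * ((n + 1) / 2)) ∧
    ∀ P : SetPartition n, SPAvoids P p123 → spread P = n / 2 * ((n + 1) / 2) →
      blockNum P = (n + 1) / 2 := by
  constructor
  · constructor
    · exact ⟨SpreadAux.W n, SpreadAux.W_avoids, SpreadAux.W_spread⟩
    · rintro s ⟨P, hA, rfl⟩
      exact (SpreadAux.main_ub P hA).1
  · intro P hA hs
    exact (SpreadAux.main_ub P hA).2 hs

end
end

section
/- An RGF w of a partition of [n] maximizes spread among RGFs in R_n(123) if and only if it has the form w = 1 2 … ⌈n/2⌉ σ where σ is a permutation (as a word) of the set {1, 2, …, ⌊n/2⌋}. -/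
open scoped Classical
noncomputable section
set_option maxHeartbeats 2000000

/-- A list of naturals is a restricted growth function. -/
def IsRGFL (w : List ℕ) : Prop :=
  ∀ i : ℕ, i < w.length → 1 ≤ w.getD i 0 ∧ w.getD i 0 ≤ (w.take i).foldr max 0 + 1

/-- The largest letter of a word. -/
def maxLetterL (w : List ℕ) : ℕ := w.foldr max 0

/-- The (0-based) index of the first occurrence of the letter `l`. -/
def firstIdxL (w : List ℕ) (l : ℕ) : ℕ := sInf {i : ℕ | i < w.length ∧ w.getD i 0 = l}

/-- The (0-based) index of the last occurrence of the letter `l`. -/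
def lastIdxL (w : List ℕ) (l : ℕ) : ℕ := sSup {i : ℕ | i < w.length ∧ w.getD i 0 = l}

/-- The spread of a word. -/
def spreadL (w : List ℕ) : ℕ :=
  ∑ l ∈ Finset.Icc 1 (maxLetterL w), (lastIdxL w l - firstIdxL w l)

/-- A word avoids the subword pattern `1212`. -/
def Avoids1212L (w : List ℕ) : Prop :=
  ¬ ∃ i j k l : ℕ, i < j ∧ j < k ∧ k < l ∧ l < w.length ∧
      w.getD i 0 = w.getD k 0 ∧ w.getD j 0 = w.getD l 0 ∧ w.getD i 0 ≠ w.getD j 0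

lemma getD_eq_get' (w : List ℕ) (i : ℕ) (h : i < w.length) : w.getD i 0 = w[i] := by
  simp [List.getD_eq_getElem?_getD, List.getElem?_eq_getElem h]

lemma foldr_max_append' (u v : List ℕ) :
    (u ++ v).foldr max 0 = max (u.foldr max 0) (v.foldr max 0) := by
  induction u with
  | nil => simp
  | cons a t ih => simp [ih, max_assoc]

lemma rgf_occurs_aux (w : List ℕ) (hrgf : IsRGFL w) :
    ∀ j, j ≤ w.length → ∀ l, 1 ≤ l → l ≤ (w.take j).foldr max 0 →
      ∃ i, i < j ∧ w.getD i 0 = l := by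
  intro j
  induction j with
  | zero => intro _ l hl1 hl2; simp at hl2; omega
  | succ j ih =>
    intro hj l hl1 hl2
    have hjlen : j < w.length := by omega
    have htake : w.take (j+1) = w.take j ++ [w[j]] := by
      rw [List.take_succ, List.getElem?_eq_getElem hjlen]
      rfl
    rw [htake, foldr_max_append'] at hl2
    simp only [List.foldr_cons, List.foldr_nil] at hl2
    rcases le_or_gt l ((w.take j).foldr max 0) with h | h
    · obtain ⟨i, hi, hv⟩ := ih (by omega) l hl1 h
      exact ⟨i, by omega, hv⟩
    · have hlj : l ≤ max w[j] 0 := by omega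
      have hwj := (hrgf j hjlen).2
      rw [getD_eq_get' w j hjlen] at hwj
      have : w[j] = l := by omega
      exact ⟨j, by omega, by rw [getD_eq_get' w j hjlen, this]⟩

lemma rgf_occurs (w : List ℕ) (hrgf : IsRGFL w) (l : ℕ) (hl1 : 1 ≤ l)
    (hl2 : l ≤ maxLetterL w) : ∃ i, i < w.length ∧ w.getD i 0 = l := by
  have := rgf_occurs_aux w hrgf w.length le_rfl l hl1 (by rwa [List.take_length])
  exact this

lemma le_foldr_max' {u : List ℕ} {x : ℕ} (h : x ∈ u) : x ≤ u.foldr max 0 := by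
  induction u with
  | nil => simp at h
  | cons a t ih =>
    rcases List.mem_cons.1 h with rfl | h
    · exact le_max_left _ _
    · exact le_trans (ih h) (le_max_right _ _)

lemma getD_le_maxLetter (w : List ℕ) (i : ℕ) (h : i < w.length) :
    w.getD i 0 ≤ maxLetterL w := by
  rw [getD_eq_get' w i h]
  exact le_foldr_max' (List.getElem_mem h)

lemma firstIdx_mem (w : List ℕ) (l : ℕ) (h : ∃ i, i < w.length ∧ w.getD i 0 = l) :
    firstIdxL w l < w.length ∧ w.getD (firstIdxL w l) 0 = l := by
  have : Set.Nonempty {i : ℕ | i < w.length ∧ w.getD i 0 = l} := h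
  exact Nat.sInf_mem this

lemma lastIdx_mem (w : List ℕ) (l : ℕ) (h : ∃ i, i < w.length ∧ w.getD i 0 = l) :
    lastIdxL w l < w.length ∧ w.getD (lastIdxL w l) 0 = l := by
  have hbdd : BddAbove {i : ℕ | i < w.length ∧ w.getD i 0 = l} :=
    ⟨w.length, fun x hx => le_of_lt hx.1⟩
  exact Nat.sSup_mem h hbdd

lemma firstIdx_le (w : List ℕ) (l i : ℕ) (hi : i < w.length) (hv : w.getD i 0 = l) :
    firstIdxL w l ≤ i := Nat.sInf_le ⟨hi, hv⟩

lemma le_lastIdx (w : List ℕ) (l i : ℕ) (hi : i < w.length) (hv : w.getD i 0 = l) :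
    i ≤ lastIdxL w l :=
  le_csSup ⟨w.length, fun x hx => le_of_lt hx.1⟩ ⟨hi, hv⟩

lemma getD_eq_get (w : List ℕ) (i : ℕ) (h : i < w.length) : w.getD i 0 = w[i] := by
  simp [List.getD_eq_getElem?_getD, List.getElem?_eq_getElem h]

lemma le_foldr_max {u : List ℕ} {x : ℕ} (h : x ∈ u) : x ≤ u.foldr max 0 := by
  induction u with
  | nil => simp at h
  | cons a t ih =>
    rcases List.mem_cons.1 h with rfl | h
    · exact le_max_left _ _
    · exact le_trans (ih h) (le_max_right _ _)

lemma foldr_max_le {u : List ℕ} {c : ℕ} (h : ∀ x ∈ u, x ≤ c) : u.foldr max 0 ≤ c := by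
  induction u with
  | nil => simp
  | cons a t ih =>
    simpa using ⟨h a (by simp), ih fun x hx => h x (by simp [hx])⟩

lemma foldr_max_append (u v : List ℕ) :
    (u ++ v).foldr max 0 = max (u.foldr max 0) (v.foldr max 0) := by
  induction u with
  | nil => simp
  | cons a t ih => simp [ih, max_assoc]

lemma foldr_max_range' (b : ℕ) : (List.range' 1 b).foldr max 0 = b := by
  induction b with
  | zero => simp
  | succ b ih => rw [List.range'_concat, foldr_max_append, ih]; simp; omega

lemma count_card (w : List ℕ) (l : ℕ) :
    w.count l = ((Finset.range w.length).filter (fun i => w.getD i 0 = l)).card := by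
  induction w using List.reverseRecOn with
  | nil => simp
  | append_singleton u x ih =>
    rw [List.count_append, List.length_append, List.length_singleton, ih]
    have hset : (Finset.range (u.length + 1)).filter (fun i => (u ++ [x]).getD i 0 = l)
        = ((Finset.range u.length).filter (fun i => u.getD i 0 = l)) ∪
          (if x = l then {u.length} else ∅) := by
      ext i
      simp only [Finset.mem_filter, Finset.mem_range, Finset.mem_union]
      constructor
      · rintro ⟨hi, hv⟩
        rcases Nat.lt_or_ge i u.length with h | h
        · left
          refine ⟨h, ?_⟩
          rw [getD_eq_get _ _ h]
          rw [getD_eq_get _ _ (by simp; omega)] at hv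
          rw [List.getElem_append_left h] at hv
          exact hv
        · have : i = u.length := by omega
          subst this
          rw [getD_eq_get _ _ (by simp)] at hv
          have : (u ++ [x])[u.length] = x := by
            rw [List.getElem_append_right (by omega)]
            simp
          rw [this] at hv
          right; subst hv; simp
      · intro h
        rcases h with h | h
        · obtain ⟨hi, hv⟩ := h
          refine ⟨by omega, ?_⟩
          rw [getD_eq_get _ _ hi] at hv
          rw [getD_eq_get _ _ (by simp; omega), List.getElem_append_left hi]
          exact hv
        · split at h
          · next heq =>
            simp at h
            subst h
            refine ⟨by omega, ?_⟩
            rw [getD_eq_get _ _ (by simp), List.getElem_append_right (by omega)]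
            simpa using heq
          · simp at h
    rw [hset, Finset.card_union_of_disjoint]
    · congr 1
      split
      · next h => simp [h]
      · next h => simp [List.count_singleton']; simp [h]
    · split
      · next => simp [Finset.disjoint_singleton_right]
      · simp

lemma botsum (S : Finset ℕ) : ∑ i ∈ Finset.range S.card, i ≤ ∑ x ∈ S, x := by
  induction S using Finset.induction_on_max with
  | empty => simp
  | insert a S ha ih =>
    have hna : a ∉ S := fun h => lt_irrefl a (ha a h)
    have hsub : S ⊆ Finset.range a := fun x hx => Finset.mem_range.2 (ha x hx)
    have hcard : S.card ≤ a := by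
      simpa using Finset.card_le_card hsub
    rw [Finset.card_insert_of_notMem hna, Finset.sum_insert hna, Finset.sum_range_succ]
    omega

lemma botsum_eq (S : Finset ℕ) (h : ∑ x ∈ S, x = ∑ i ∈ Finset.range S.card, i) :
    S = Finset.range S.card := by
  induction S using Finset.induction_on_max with
  | empty => simp
  | insert a S ha ih =>
    have hna : a ∉ S := fun hh => lt_irrefl a (ha a hh)
    have hsub : S ⊆ Finset.range a := fun x hx => Finset.mem_range.2 (ha x hx)
    have hcard : S.card ≤ a := by simpa using Finset.card_le_card hsub
    have hbs := botsum S
    rw [Finset.card_insert_of_notMem hna] at h ⊢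
    rw [Finset.sum_insert hna, Finset.sum_range_succ] at h
    have ha' : a = S.card := by omega
    have hs' : ∑ x ∈ S, x = ∑ i ∈ Finset.range S.card, i := by omega
    rw [ih hs', Finset.range_add_one, Finset.card_range, ← ha']

lemma topsum (n : ℕ) (S : Finset ℕ) (hS : S ⊆ Finset.range n) :
    ∑ x ∈ S, x + ∑ i ∈ Finset.range S.card, i + S.card ≤ S.card * n := by
  classical
  have hlt : ∀ x ∈ S, x < n := fun x hx => Finset.mem_range.1 (hS hx)
  have hinj : Set.InjOn (fun x => n - 1 - x) S := by
    intro x hx y hy hxy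
    have := hlt x hx; have := hlt y hy
    simp only at hxy
    omega
  have hcard : (S.image (fun x => n - 1 - x)).card = S.card := Finset.card_image_of_injOn hinj
  have hsum : ∑ y ∈ S.image (fun x => n - 1 - x), y = ∑ x ∈ S, (n - 1 - x) :=
    Finset.sum_image (fun x hx y hy => hinj hx hy)
  have hbs := botsum (S.image (fun x => n - 1 - x))
  rw [hcard, hsum] at hbs
  have htot : ∑ x ∈ S, x + ∑ x ∈ S, (n - 1 - x) = S.card * (n - 1) := by
    rw [← Finset.sum_add_distrib]
    rw [Finset.sum_congr rfl (fun x hx => (by have := hlt x hx; omega : x + (n - 1 - x) = n - 1))]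
    simp [Finset.sum_const, mul_comm]
  rcases Nat.eq_zero_or_pos S.card with h0 | hpos
  · rw [Finset.card_eq_zero.1 h0] at *; simp
  · have hn : 1 ≤ n := by
      obtain ⟨x, hx⟩ := Finset.card_pos.1 hpos
      have := hlt x hx; omega
    have : S.card * n = S.card * (n-1) + S.card := by
      cases n with
      | zero => omega
      | succ m => simp [Nat.mul_succ]
    omega

lemma topsum_eq (n : ℕ) (S : Finset ℕ) (hS : S ⊆ Finset.range n)
    (h : ∑ x ∈ S, x + ∑ i ∈ Finset.range S.card, i + S.card = S.card * n) :
    S = Finset.Ico (n - S.card) n := by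
  classical
  have hlt : ∀ x ∈ S, x < n := fun x hx => Finset.mem_range.1 (hS hx)
  have hkn : S.card ≤ n := by simpa using Finset.card_le_card hS
  have hinj : Set.InjOn (fun x => n - 1 - x) S := by
    intro x hx y hy hxy
    have := hlt x hx; have := hlt y hy
    simp only at hxy
    omega
  set S' := S.image (fun x => n - 1 - x) with hS'
  have hcard : S'.card = S.card := Finset.card_image_of_injOn hinj
  have hsum : ∑ y ∈ S', y = ∑ x ∈ S, (n - 1 - x) :=
    Finset.sum_image (fun x hx y hy => hinj hx hy)
  have htot : ∑ x ∈ S, x + ∑ x ∈ S, (n - 1 - x) = S.card * (n - 1) := by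
    rw [← Finset.sum_add_distrib]
    rw [Finset.sum_congr rfl (fun x hx => (by have := hlt x hx; omega : x + (n - 1 - x) = n - 1))]
    simp [Finset.sum_const, mul_comm]
  rcases Nat.eq_zero_or_pos S.card with h0 | hpos
  · rw [Finset.card_eq_zero.1 h0] at *
    simp_all
  · have hn : 1 ≤ n := by
      obtain ⟨x, hx⟩ := Finset.card_pos.1 hpos
      have := hlt x hx; omega
    have hmul : S.card * n = S.card * (n-1) + S.card := by
      cases n with
      | zero => omega
      | succ m => simp [Nat.mul_succ]
    have hS'sum : ∑ y ∈ S', y = ∑ i ∈ Finset.range S'.card, i := by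
      rw [hcard, hsum]; omega
    have hS'eq : S' = Finset.range S.card := by
      rw [← hcard]; exact botsum_eq S' hS'sum
    -- now recover S
    have hSsub : S ⊆ (Finset.range S.card).image (fun i => n - 1 - i) := by
      intro x hx
      rw [← hS'eq]
      apply Finset.mem_image.2
      refine ⟨n - 1 - x, Finset.mem_image_of_mem _ hx, ?_⟩
      have := hlt x hx; omega
    have hicard : ((Finset.range S.card).image (fun i => n - 1 - i)).card ≤ S.card := by
      apply le_trans (Finset.card_image_le) (by simp)
    have hSeq : S = (Finset.range S.card).image (fun i => n - 1 - i) :=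
      Finset.eq_of_subset_of_card_le hSsub hicard
    have himg : (Finset.range S.card).image (fun i => n - 1 - i) = Finset.Ico (n - S.card) n := by
      ext y
      simp only [Finset.mem_image, Finset.mem_range, Finset.mem_Ico]
      constructor
      · rintro ⟨i, hi, rfl⟩; omega
      · intro hy; exact ⟨n - 1 - y, by omega, by omega⟩
    exact hSeq.trans himg

lemma count_card' (w : List ℕ) (l : ℕ) :
    w.count l = ((Finset.range w.length).filter (fun i => w.getD i 0 = l)).card :=
  count_card w l


lemma count_range'' (s len x : ℕ) :
    (List.range' s len).count x = if x ∈ List.range' s len then 1 else 0 := by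
  split
  · exact List.count_eq_one_of_mem (List.nodup_range' (s := s) (n := len)) ‹_›
  · exact List.count_eq_zero_of_not_mem ‹_›

lemma key (w : List ℕ) (hrgf : IsRGFL w) (htwice : ∀ l : ℕ, w.count l ≤ 2) :
    spreadL w ≤ (w.length / 2) * ((w.length + 1) / 2) ∧
    (spreadL w = (w.length / 2) * ((w.length + 1) / 2) →
      ∃ σ : List ℕ, σ.Perm (List.range' 1 (w.length / 2)) ∧
        w = List.range' 1 ((w.length + 1) / 2) ++ σ) := by
  classical
  set n := w.length with hn
  set m := maxLetterL w with hm
  set a := n / 2 with ha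
  set b := (n + 1) / 2 with hb
  have hab : a + b = n := by omega
  have haleb : a ≤ b := by omega
  -- occurrences
  have hocc : ∀ l ∈ Finset.Icc 1 m, ∃ i, i < w.length ∧ w.getD i 0 = l := by
    intro l hl
    obtain ⟨h1, h2⟩ := Finset.mem_Icc.1 hl
    exact rgf_occurs w hrgf l h1 h2
  have hcpos : ∀ l ∈ Finset.Icc 1 m, 1 ≤ w.count l := by
    intro l hl
    obtain ⟨i, hi, hv⟩ := hocc l hl
    have : l ∈ w := by
      rw [getD_eq_get' w i hi] at hv
      exact hv ▸ List.getElem_mem hi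
    exact List.count_pos_iff.2 this
  -- sum of counts = n
  have hsum_counts : ∑ l ∈ Finset.Icc 1 m, w.count l = n := by
    have hsub : w.toFinset ⊆ Finset.Icc 1 m := by
      intro x hx
      rw [List.mem_toFinset] at hx
      obtain ⟨i, hi, hv⟩ := List.mem_iff_getElem.1 hx
      rw [Finset.mem_Icc]
      have h1 := (hrgf i hi).1
      rw [getD_eq_get' w i hi] at h1
      have h2 := getD_le_maxLetter w i hi
      rw [getD_eq_get' w i hi] at h2
      rw [← hv]
      exact ⟨h1, h2⟩
    have hmain : ∑ l ∈ w.toFinset, w.count l = n := by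
      exact List.sum_toFinset_count_eq_length w
    rw [← hmain]
    exact (Finset.sum_subset hsub (fun x _ hx => by
      rw [List.count_eq_zero]
      exact fun hmem => hx (List.mem_toFinset.2 hmem))).symm
  set T := (Finset.Icc 1 m).filter (fun l => w.count l = 2) with hT
  set k := T.card with hk
  have hTsub : T ⊆ Finset.Icc 1 m := Finset.filter_subset _ _
  have hklem : k ≤ m := by
    have := Finset.card_le_card hTsub
    simpa [Nat.card_Icc] using this
  have hnmk : n = m + k := by
    have : ∑ l ∈ Finset.Icc 1 m, w.count l
        = ∑ l ∈ Finset.Icc 1 m, (1 + if l ∈ T then 1 else 0) := by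
      apply Finset.sum_congr rfl
      intro l hl
      have h1 := hcpos l hl
      have h2 := htwice l
      by_cases hc : w.count l = 2
      · simp [hT, Finset.mem_filter, hl, hc]
      · have : w.count l = 1 := by omega
        simp [hT, Finset.mem_filter, hc, this]
    rw [this, Finset.sum_add_distrib] at hsum_counts
    rw [Finset.sum_ite_mem, Finset.sum_const, Finset.sum_const] at hsum_counts
    have hinter : Finset.Icc 1 m ∩ T = T := Finset.inter_eq_right.2 hTsub
    rw [hinter] at hsum_counts
    simp [Nat.card_Icc] at hsum_counts
    omega
  -- first = last for count-1 letters
  have hfl_eq : ∀ l ∈ Finset.Icc 1 m, w.count l = 1 → lastIdxL w l = firstIdxL w l := by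
    intro l hl hc
    have hocl := hocc l hl
    have hfm := firstIdx_mem w l hocl
    have hlm := lastIdx_mem w l hocl
    have hcard := count_card' w l
    rw [hc] at hcard
    have hfmem : firstIdxL w l ∈ (Finset.range w.length).filter (fun i => w.getD i 0 = l) := by
      simp only [Finset.mem_filter, Finset.mem_range]
      exact ⟨hfm.1, hfm.2⟩
    have hlmem : lastIdxL w l ∈ (Finset.range w.length).filter (fun i => w.getD i 0 = l) := by
      simp only [Finset.mem_filter, Finset.mem_range]
      exact ⟨hlm.1, hlm.2⟩
    exact Finset.card_le_one.1 (le_of_eq hcard.symm) _ hlmem _ hfmem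
  have hfle : ∀ l ∈ Finset.Icc 1 m, firstIdxL w l ≤ lastIdxL w l := by
    intro l hl
    have hlm := lastIdx_mem w l (hocc l hl)
    exact firstIdx_le w l _ hlm.1 hlm.2
  have hspread_T : spreadL w = ∑ l ∈ T, (lastIdxL w l - firstIdxL w l) := by
    rw [spreadL, ← hm]
    refine (Finset.sum_subset hTsub ?_).symm
    intro l hl hlT
    have h1 := hcpos l hl
    have h2 := htwice l
    have hc1 : w.count l = 1 := by
      by_contra hc
      exact hlT (Finset.mem_filter.2 ⟨hl, by omega⟩)
    rw [hfl_eq l hl hc1]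
    omega
  have hFL : ∑ l ∈ T, firstIdxL w l + ∑ l ∈ T, (lastIdxL w l - firstIdxL w l)
      = ∑ l ∈ T, lastIdxL w l := by
    rw [← Finset.sum_add_distrib]
    apply Finset.sum_congr rfl
    intro l hl
    have := hfle l (hTsub hl)
    omega
  -- image sets
  set Fs := T.image (firstIdxL w) with hFs
  set Ls := T.image (lastIdxL w) with hLs
  have hFinj : Set.InjOn (firstIdxL w) T := by
    intro x hx y hy hxy
    have hxm := firstIdx_mem w x (hocc x (hTsub hx))
    have hym := firstIdx_mem w y (hocc y (hTsub hy))
    rw [← hxm.2, ← hym.2, hxy]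
  have hLinj : Set.InjOn (lastIdxL w) T := by
    intro x hx y hy hxy
    have hxm := lastIdx_mem w x (hocc x (hTsub hx))
    have hym := lastIdx_mem w y (hocc y (hTsub hy))
    rw [← hxm.2, ← hym.2, hxy]
  have hFs_card : Fs.card = k := Finset.card_image_of_injOn hFinj
  have hLs_card : Ls.card = k := Finset.card_image_of_injOn hLinj
  have hFs_sum : ∑ x ∈ Fs, x = ∑ l ∈ T, firstIdxL w l :=
    Finset.sum_image (fun x hx y hy => hFinj hx hy)
  have hLs_sum : ∑ x ∈ Ls, x = ∑ l ∈ T, lastIdxL w l :=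
    Finset.sum_image (fun x hx y hy => hLinj hx hy)
  have hFs_sub : Fs ⊆ Finset.range n := by
    intro x hx
    obtain ⟨l, hl, rfl⟩ := Finset.mem_image.1 hx
    exact Finset.mem_range.2 (firstIdx_mem w l (hocc l (hTsub hl))).1
  have hLs_sub : Ls ⊆ Finset.range n := by
    intro x hx
    obtain ⟨l, hl, rfl⟩ := Finset.mem_image.1 hx
    exact Finset.mem_range.2 (lastIdx_mem w l (hocc l (hTsub hl))).1
  have hbot : ∑ i ∈ Finset.range k, i ≤ ∑ x ∈ Fs, x := by
    have := botsum Fs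
    rwa [hFs_card] at this
  have htop : ∑ x ∈ Ls, x + ∑ i ∈ Finset.range k, i + k ≤ k * n := by
    have := topsum n Ls hLs_sub
    rwa [hLs_card] at this
  set R := ∑ i ∈ Finset.range k, i with hR
  have hgauss : R * 2 + k = k * k := by
    rw [hR, Finset.sum_range_id_mul_two]
    cases k with
    | zero => simp
    | succ j => simp [Nat.succ_sub_one]; ring
  have hka : k ≤ a := by omega
  -- integer versions
  set SF := ∑ l ∈ T, firstIdxL w l with hSF
  set SL := ∑ l ∈ T, lastIdxL w l with hSL
  have hS : SF + spreadL w = SL := by rw [hspread_T]; exact hFL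
  have htop' : SL + R + k ≤ k * n := by rw [← hLs_sum]; exact htop
  have hbot' : R ≤ SF := by rw [← hFs_sum]; exact hbot
  have hZ1 : (SF : ℤ) + (spreadL w : ℤ) = (SL : ℤ) := by exact_mod_cast hS
  have hZ2 : (SL : ℤ) + (R : ℤ) + (k : ℤ) ≤ (k : ℤ) * (n : ℤ) := by exact_mod_cast htop'
  have hZ3 : (R : ℤ) ≤ (SF : ℤ) := by exact_mod_cast hbot'
  have hZ4 : (R : ℤ) * 2 + (k : ℤ) = (k : ℤ) * (k : ℤ) := by exact_mod_cast hgauss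
  have hZ5 : (k : ℤ) ≤ (a : ℤ) := by exact_mod_cast hka
  have hZ6 : (a : ℤ) + (b : ℤ) = (n : ℤ) := by exact_mod_cast hab
  have hZ7 : (a : ℤ) ≤ (b : ℤ) := by exact_mod_cast haleb
  have hineq : spreadL w ≤ a * b := by
    have hzz : (spreadL w : ℤ) ≤ (a : ℤ) * (b : ℤ) := by
      nlinarith [mul_nonneg (sub_nonneg.2 hZ5) (sub_nonneg.2 (le_trans hZ5 hZ7))]
    exact_mod_cast hzz
  refine ⟨hineq, ?_⟩
  intro hs
  -- equality case
  rw [← hZ6] at hZ2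
  have hZs : (spreadL w : ℤ) = (a : ℤ) * (b : ℤ) := by exact_mod_cast hs
  have hkeqa : k = a := by
    by_contra hne
    have hlt : k < a := lt_of_le_of_ne hka hne
    have h1 : (k : ℤ) + 1 ≤ (a : ℤ) := by exact_mod_cast hlt
    nlinarith [mul_pos (by linarith : (0:ℤ) < (a:ℤ) - (k:ℤ))
      (by linarith : (0:ℤ) < (b:ℤ) - (k:ℤ))]
  have hKA : (k : ℤ) = (a : ℤ) := by exact_mod_cast hkeqa
  have h4 : (k : ℤ) * (k : ℤ) = (k : ℤ) * (a : ℤ) := by rw [hKA]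
  have h5 : (k : ℤ) * (b : ℤ) = (a : ℤ) * (b : ℤ) := by rw [hKA]
  have hFR : SF = R := by
    have h1 : (SF : ℤ) = (R : ℤ) := by linarith
    exact_mod_cast h1
  have hLval : SL + R + k = k * n := by
    have h6 : (k : ℤ) * (n : ℤ) = (k : ℤ) * (a : ℤ) + (k : ℤ) * (b : ℤ) := by
      rw [← hZ6]; ring
    have h1 : (SL : ℤ) + (R : ℤ) + (k : ℤ) = (k : ℤ) * (n : ℤ) := by linarith
    exact_mod_cast h1
  have hFs_eq : Fs = Finset.range k := by
    have h1 : ∑ x ∈ Fs, x = ∑ i ∈ Finset.range Fs.card, i := by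
      rw [hFs_card, hFs_sum, hFR]
    have h2 := botsum_eq Fs h1
    rwa [hFs_card] at h2
  have hLs_eq : Ls = Finset.Ico (n - k) n := by
    have h1 : ∑ x ∈ Ls, x + ∑ i ∈ Finset.range Ls.card, i + Ls.card = Ls.card * n := by
      rw [hLs_card, hLs_sum, ← hR]; exact hLval
    have h2 := topsum_eq n Ls hLs_sub h1
    rwa [hLs_card] at h2
  have hmb : m = b := by omega
  have hbn : b ≤ n := by omega
  -- every position before b is a first occurrence
  have hfirst : ∀ p, p < b → firstIdxL w (w.getD p 0) = p := by
    intro p hp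
    have hpn : p < n := by omega
    set l := w.getD p 0 with hl
    have hl1 : 1 ≤ l := (hrgf p hpn).1
    have hlm2 : l ≤ m := getD_le_maxLetter w p hpn
    have hlicc : l ∈ Finset.Icc 1 m := Finset.mem_Icc.2 ⟨hl1, hlm2⟩
    have hfp : firstIdxL w l ≤ p := firstIdx_le w l p hpn hl.symm
    by_contra hne
    have hflt : firstIdxL w l < p := lt_of_le_of_ne hfp hne
    have hfm := firstIdx_mem w l (hocc l hlicc)
    have h1 := hcpos l hlicc
    have h2 := htwice l
    rcases (by omega : w.count l = 1 ∨ w.count l = 2) with hc | hc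
    · have hcard := count_card' w l
      rw [hc] at hcard
      have hmem1 : p ∈ (Finset.range w.length).filter (fun i => w.getD i 0 = l) :=
        Finset.mem_filter.2 ⟨Finset.mem_range.2 hpn, hl.symm⟩
      have hmem2 : firstIdxL w l ∈ (Finset.range w.length).filter (fun i => w.getD i 0 = l) :=
        Finset.mem_filter.2 ⟨Finset.mem_range.2 hfm.1, hfm.2⟩
      have := Finset.card_le_one.1 (le_of_eq hcard.symm) _ hmem1 _ hmem2
      omega
    · have hlT : l ∈ T := Finset.mem_filter.2 ⟨hlicc, hc⟩
      have hlast_mem : lastIdxL w l ∈ Ls := Finset.mem_image_of_mem _ hlT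
      rw [hLs_eq] at hlast_mem
      have hlast_ge : n - k ≤ lastIdxL w l := (Finset.mem_Ico.1 hlast_mem).1
      have hplast : p < lastIdxL w l := by omega
      have hcard := count_card' w l
      rw [hc] at hcard
      have hlm3 := lastIdx_mem w l (hocc l hlicc)
      have hsub3 : ({firstIdxL w l, p, lastIdxL w l} : Finset ℕ)
          ⊆ (Finset.range w.length).filter (fun i => w.getD i 0 = l) := by
        intro x hx
        simp only [Finset.mem_insert, Finset.mem_singleton] at hx
        rcases hx with rfl | rfl | rfl
        · exact Finset.mem_filter.2 ⟨Finset.mem_range.2 hfm.1, hfm.2⟩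
        · exact Finset.mem_filter.2 ⟨Finset.mem_range.2 hpn, hl.symm⟩
        · exact Finset.mem_filter.2 ⟨Finset.mem_range.2 hlm3.1, hlm3.2⟩
      have hc3 : ({firstIdxL w l, p, lastIdxL w l} : Finset ℕ).card = 3 := by
        rw [Finset.card_insert_of_notMem (by simp; omega),
          Finset.card_insert_of_notMem (by simp; omega), Finset.card_singleton]
      have := Finset.card_le_card hsub3
      omega
  -- the prefix is 1 2 ... b
  have hpre : ∀ p, p < b → w.getD p 0 = p + 1 := by
    intro p
    induction p using Nat.strong_induction_on with
    | _ p IH =>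
      intro hp
      have hpn : p < n := by omega
      have hmaxle : (w.take p).foldr max 0 ≤ p := by
        apply foldr_max_le
        intro x hx
        rw [List.mem_take_iff_getElem] at hx
        obtain ⟨i, hi, rfl⟩ := hx
        have hip : i < p := lt_of_lt_of_le hi (min_le_left _ _)
        have hiw : i < w.length := lt_of_lt_of_le hi (min_le_right _ _)
        rw [← getD_eq_get' w i hiw, IH i hip (by omega)]
        omega
      have hub := (hrgf p hpn).2
      have hlb := (hrgf p hpn).1
      by_contra hne
      have hle : w.getD p 0 ≤ p := by omega
      have hq : w.getD p 0 - 1 < p := by omega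
      have hqval := IH _ hq (by omega)
      have hqv : w.getD (w.getD p 0 - 1) 0 = w.getD p 0 := by rw [hqval]; omega
      have hfp := hfirst p hp
      have hfle2 : firstIdxL w (w.getD p 0) ≤ w.getD p 0 - 1 :=
        firstIdx_le w _ _ (by omega) hqv
      omega
  have hfirst_val : ∀ l, 1 ≤ l → l ≤ b → firstIdxL w l = l - 1 := by
    intro l h1 h2
    have h3 : l - 1 < b := by omega
    have h4 := hfirst (l - 1) h3
    rw [hpre (l - 1) h3] at h4
    rw [show l = l - 1 + 1 from by omega, Nat.add_sub_cancel]
    exact h4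
  -- T = Icc 1 a
  have hTeq : T = Finset.Icc 1 a := by
    have hsub : T ⊆ Finset.Icc 1 a := by
      intro l hl
      obtain ⟨hlicc, hc⟩ := Finset.mem_filter.1 hl
      obtain ⟨hl1, hl2⟩ := Finset.mem_Icc.1 hlicc
      have hfmem : firstIdxL w l ∈ Fs := Finset.mem_image_of_mem _ hl
      rw [hFs_eq] at hfmem
      have hflt : firstIdxL w l < k := Finset.mem_range.1 hfmem
      have hfv : firstIdxL w l = l - 1 := hfirst_val l hl1 (by omega)
      rw [Finset.mem_Icc]
      omega
    exact Finset.eq_of_subset_of_card_le hsub (by rw [Nat.card_Icc, ← hk]; omega)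
  have hcnt2 : ∀ l, 1 ≤ l → l ≤ a → w.count l = 2 := by
    intro l h1 h2
    have : l ∈ T := by rw [hTeq]; exact Finset.mem_Icc.2 ⟨h1, h2⟩
    exact (Finset.mem_filter.1 this).2
  have hcnt1 : ∀ l, a < l → l ≤ b → w.count l = 1 := by
    intro l hla hlb2
    have hlicc : l ∈ Finset.Icc 1 m := Finset.mem_Icc.2 ⟨by omega, by omega⟩
    have h1 := hcpos l hlicc
    have h2 := htwice l
    have h3 : l ∉ T := by rw [hTeq]; rw [Finset.mem_Icc]; omega
    have h4 : w.count l ≠ 2 := fun hc => h3 (Finset.mem_filter.2 ⟨hlicc, hc⟩)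
    omega
  have hcnt0 : ∀ l, l = 0 ∨ b < l → w.count l = 0 := by
    intro l hl
    rw [List.count_eq_zero]
    intro hmem
    obtain ⟨i, hi, hv⟩ := List.mem_iff_getElem.1 hmem
    have h1 := (hrgf i hi).1
    have h2 := getD_le_maxLetter w i hi
    rw [getD_eq_get' w i hi, hv] at h1 h2
    omega
  -- decomposition
  have htake : w.take b = List.range' 1 b := by
    apply List.ext_getElem
    · rw [List.length_take, List.length_range']; omega
    · intro i h1 h2
      have hib : i < b := by simpa using h2
      have hiw : i < w.length := by omega
      have hv : w[i] = i + 1 := by rw [← getD_eq_get' w i hiw]; exact hpre i hib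
      simp only [List.getElem_take, List.getElem_range', hv]
      omega
  have hweq : w = List.range' 1 b ++ w.drop b := by
    rw [← htake]; exact (List.take_append_drop b w).symm
  refine ⟨w.drop b, ?_, hweq⟩
  rw [List.perm_iff_count]
  intro x
  have hsplit : w.count x = (List.range' 1 b).count x + (w.drop b).count x := by
    conv_lhs => rw [hweq]
    rw [List.count_append]
  have hmem_iff : ∀ len, x ∈ List.range' 1 len ↔ 1 ≤ x ∧ x ≤ len := by
    intro len; rw [List.mem_range'_1]; omega
  by_cases h1 : 1 ≤ x ∧ x ≤ a
  · have e1 : (List.range' 1 b).count x = 1 :=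
      List.count_eq_one_of_mem (List.nodup_range' (s := 1) (n := b)) ((hmem_iff b).2 ⟨h1.1, le_trans h1.2 haleb⟩)
    have e2 : (List.range' 1 a).count x = 1 :=
      List.count_eq_one_of_mem (List.nodup_range' (s := 1) (n := a)) ((hmem_iff a).2 h1)
    have e3 := hcnt2 x h1.1 h1.2
    omega
  · by_cases h2 : 1 ≤ x ∧ x ≤ b
    · have e1 : (List.range' 1 b).count x = 1 :=
        List.count_eq_one_of_mem (List.nodup_range' (s := 1) (n := b)) ((hmem_iff b).2 h2)
      have e2 : (List.range' 1 a).count x = 0 :=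
        List.count_eq_zero_of_not_mem (fun hmem => h1 ((hmem_iff a).1 hmem))
      have e3 := hcnt1 x (by omega) h2.2
      omega
    · have e1 : (List.range' 1 b).count x = 0 :=
        List.count_eq_zero_of_not_mem (fun hmem => h2 ((hmem_iff b).1 hmem))
      have e2 : (List.range' 1 a).count x = 0 :=
        List.count_eq_zero_of_not_mem (fun hmem => h1 ((hmem_iff a).1 hmem))
      have e3 := hcnt0 x (by omega)
      omega


lemma getD_append_range' (b : ℕ) (s : List ℕ) (i : ℕ) (hi : i < b) :
    (List.range' 1 b ++ s).getD i 0 = i + 1 := by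
  rw [getD_eq_get' _ i (by simp [List.length_append]; omega)]
  rw [List.getElem_append_left (by simpa using hi)]
  rw [List.getElem_range']
  omega

lemma getD_append_right' (p s : List ℕ) (j : ℕ) (hj : j < s.length) :
    (p ++ s).getD (p.length + j) 0 = s.getD j 0 := by
  rw [getD_eq_get' _ _ (by simp; omega), getD_eq_get' s j hj]
  rw [List.getElem_append_right (by omega)]
  congr 1
  omega

lemma le_foldr_take (v : List ℕ) (j i : ℕ) (hj : j < i) (hji : j < v.length) :
    v.getD j 0 ≤ (v.take i).foldr max 0 := by
  apply le_foldr_max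
  rw [List.mem_take_iff_getElem]
  exact ⟨j, lt_min hj hji, (getD_eq_get' v j hji).symm⟩

lemma form_spread (n : ℕ) (σ : List ℕ) (hσ : σ.Perm (List.range' 1 (n / 2))) :
    spreadL (List.range' 1 ((n + 1) / 2) ++ σ) = (n / 2) * ((n + 1) / 2) := by
  classical
  set a := n / 2 with ha
  set b := (n + 1) / 2 with hb
  set v := List.range' 1 b ++ σ with hv
  have hσlen : σ.length = a := by rw [hσ.length_eq]; simp
  have hvlen : v.length = b + a := by simp [hv, hσlen]
  have hσmem : ∀ x, x ∈ σ ↔ 1 ≤ x ∧ x ≤ a := by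
    intro x
    rw [hσ.mem_iff, List.mem_range'_1]
    omega
  rcases Nat.eq_zero_or_pos n with h0 | hn
  · have ha0 : a = 0 := by omega
    have hb0 : b = 0 := by omega
    have hσ0 : σ = [] := List.length_eq_zero_iff.1 (by omega)
    show spreadL v = a * b
    rw [hv, hσ0, hb0, ha0]
    simp [spreadL, maxLetterL]
  have hb1 : 1 ≤ b := by omega
  have haleb : a ≤ b := by omega
  have hmax : maxLetterL v = b := by
    rw [hv, maxLetterL, foldr_max_append', foldr_max_range']
    have : σ.foldr max 0 ≤ a := foldr_max_le (fun x hx => ((hσmem x).1 hx).2)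
    omega
  have hfst : ∀ l, 1 ≤ l → l ≤ b → firstIdxL v l = l - 1 := by
    intro l h1 h2
    have hl1 : l - 1 < v.length := by omega
    have hval : v.getD (l - 1) 0 = l := by
      rw [hv, getD_append_range' b σ (l - 1) (by omega)]; omega
    have hle := firstIdx_le v l (l - 1) hl1 hval
    obtain ⟨hfl, hfv⟩ := firstIdx_mem v l ⟨l - 1, hl1, hval⟩
    by_contra hne
    have hlt : firstIdxL v l < l - 1 := by omega
    set f := firstIdxL v l with hfdef
    have hthis : v.getD f 0 = f + 1 := by
      rw [hv]; exact getD_append_range' b σ f (by omega)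
    rw [hfv] at hthis
    omega
  have hcnt : ∀ x, v.count x = (List.range' 1 b).count x + σ.count x := by
    intro x; rw [hv, List.count_append]
  have hcnt1 : ∀ l, a < l → l ≤ b → v.count l = 1 := by
    intro l h1 h2
    rw [hcnt, count_range'']
    rw [if_pos (List.mem_range'_1.2 ⟨by omega, by omega⟩)]
    rw [List.count_eq_zero_of_not_mem (fun hm => by have := (hσmem l).1 hm; omega)]
  have hfl_eq : ∀ l, a < l → l ≤ b → lastIdxL v l = firstIdxL v l := by
    intro l h1 h2
    have hocc : ∃ i, i < v.length ∧ v.getD i 0 = l :=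
      ⟨l - 1, by omega, by rw [hv, getD_append_range' b σ (l - 1) (by omega)]; omega⟩
    have hfm := firstIdx_mem v l hocc
    have hlm := lastIdx_mem v l hocc
    have hcard := count_card' v l
    rw [hcnt1 l h1 h2] at hcard
    exact Finset.card_le_one.1 (le_of_eq hcard.symm) _
      (Finset.mem_filter.2 ⟨Finset.mem_range.2 hlm.1, hlm.2⟩) _
      (Finset.mem_filter.2 ⟨Finset.mem_range.2 hfm.1, hfm.2⟩)
  have hlast_mem : ∀ l, 1 ≤ l → l ≤ a → b ≤ lastIdxL v l ∧ lastIdxL v l < b + a := by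
    intro l h1 h2
    obtain ⟨j, hj, hjv⟩ := List.mem_iff_getElem.1 ((hσmem l).2 ⟨h1, h2⟩)
    have hidx : v.getD (b + j) 0 = l := by
      have hr := getD_append_right' (List.range' 1 b) σ j hj
      rw [List.length_range'] at hr
      rw [hv, hr, getD_eq_get' σ j hj, hjv]
    have hbj : b + j < v.length := by omega
    have hge : b + j ≤ lastIdxL v l := le_lastIdx v l (b + j) hbj hidx
    have hlt := (lastIdx_mem v l ⟨b + j, hbj, hidx⟩).1
    exact ⟨by omega, by omega⟩
  have hocc' : ∀ l ∈ Finset.Icc 1 a, ∃ i, i < v.length ∧ v.getD i 0 = l := by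
    intro l hl
    obtain ⟨h1, h2⟩ := Finset.mem_Icc.1 hl
    exact ⟨l - 1, by omega, by rw [hv, getD_append_range' b σ (l - 1) (by omega)]; omega⟩
  have hLinj : Set.InjOn (lastIdxL v) (Finset.Icc 1 a) := by
    intro x hx y hy hxy
    have hxm := lastIdx_mem v x (hocc' x hx)
    have hym := lastIdx_mem v y (hocc' y hy)
    rw [← hxm.2, ← hym.2, hxy]
  have hL_img : (Finset.Icc 1 a).image (lastIdxL v) = Finset.Ico b (b + a) := by
    apply Finset.eq_of_subset_of_card_le
    · intro x hx
      obtain ⟨l, hl, rfl⟩ := Finset.mem_image.1 hx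
      obtain ⟨h1, h2⟩ := Finset.mem_Icc.1 hl
      exact Finset.mem_Ico.2 (hlast_mem l h1 h2)
    · rw [Nat.card_Ico, Finset.card_image_of_injOn hLinj, Nat.card_Icc]
      omega
  have hsum_last : ∑ l ∈ Finset.Icc 1 a, lastIdxL v l = ∑ x ∈ Finset.Ico b (b + a), x := by
    rw [← hL_img]
    exact (Finset.sum_image (g := lastIdxL v) (f := fun x => x) (fun x hx y hy => hLinj hx hy)).symm
  have hIco_sum : ∑ x ∈ Finset.Ico b (b + a), x = a * b + ∑ i ∈ Finset.range a, i := by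
    have himg : Finset.Ico b (b + a) = (Finset.range a).image (fun i => b + i) := by
      ext x
      simp only [Finset.mem_Ico, Finset.mem_image, Finset.mem_range]
      constructor
      · intro hx; exact ⟨x - b, by omega, by omega⟩
      · rintro ⟨i, hi, rfl⟩; omega
    rw [himg, Finset.sum_image (by intro x hx y hy h; simp only at h; omega)]
    rw [Finset.sum_add_distrib, Finset.sum_const, Finset.card_range]
    simp [mul_comm]
  have hfirst_sum' : ∑ l ∈ Finset.Icc 1 a, (l - 1) = ∑ i ∈ Finset.range a, i := by
    have himg : Finset.Icc 1 a = (Finset.range a).image (fun i => i + 1) := by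
      ext x
      simp only [Finset.mem_Icc, Finset.mem_image, Finset.mem_range]
      constructor
      · intro hx; exact ⟨x - 1, by omega, by omega⟩
      · rintro ⟨i, hi, rfl⟩; omega
    rw [himg, Finset.sum_image (by intro x hx y hy h; simp only at h; omega)]
    simp
  have hspread : spreadL v = ∑ l ∈ Finset.Icc 1 a, (lastIdxL v l - firstIdxL v l) := by
    rw [spreadL, hmax]
    refine (Finset.sum_subset (Finset.Icc_subset_Icc_right haleb) ?_).symm
    intro l hl hla
    obtain ⟨h1, h2⟩ := Finset.mem_Icc.1 hl
    have hal : a < l := by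
      by_contra hno
      push_neg at hno
      exact hla (Finset.mem_Icc.2 ⟨h1, hno⟩)
    rw [hfl_eq l hal h2]
    omega
  have hterm : ∑ l ∈ Finset.Icc 1 a, firstIdxL v l
      + ∑ l ∈ Finset.Icc 1 a, (lastIdxL v l - firstIdxL v l)
      = ∑ l ∈ Finset.Icc 1 a, lastIdxL v l := by
    rw [← Finset.sum_add_distrib]
    apply Finset.sum_congr rfl
    intro l hl
    obtain ⟨h1, h2⟩ := Finset.mem_Icc.1 hl
    have hf := hfst l h1 (by omega)
    have hlm := hlast_mem l h1 h2
    omega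
  have hfirst_sum : ∑ l ∈ Finset.Icc 1 a, firstIdxL v l = ∑ l ∈ Finset.Icc 1 a, (l - 1) := by
    apply Finset.sum_congr rfl
    intro l hl
    obtain ⟨h1, h2⟩ := Finset.mem_Icc.1 hl
    exact hfst l h1 (by omega)
  rw [hfirst_sum, hfirst_sum', hsum_last, hIco_sum] at hterm
  show spreadL v = a * b
  rw [hspread]
  linarith

lemma canon_rgf (n : ℕ) : IsRGFL (List.range' 1 ((n + 1) / 2) ++ List.range' 1 (n / 2)) := by
  set a := n / 2 with ha
  set b := (n + 1) / 2 with hb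
  set v := List.range' 1 b ++ List.range' 1 a with hv
  have haleb : a ≤ b := by omega
  have hvlen : v.length = b + a := by simp [hv]
  intro i hi
  rw [hvlen] at hi
  by_cases hib : i < b
  · have hval : v.getD i 0 = i + 1 := by rw [hv]; exact getD_append_range' b _ i hib
    refine ⟨by rw [hval]; omega, ?_⟩
    rw [hval]
    rcases Nat.eq_zero_or_pos i with h0 | hpos
    · subst h0; simp
    · have hprev : v.getD (i - 1) 0 = i := by
        rw [hv, getD_append_range' b _ (i - 1) (by omega)]; omega
      have hfol := le_foldr_take v (i - 1) i (by omega) (by omega)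
      rw [hprev] at hfol
      omega
  · push_neg at hib
    have hj : i - b < a := by omega
    have hb1 : 1 ≤ b := by omega
    have hval : v.getD i 0 = i - b + 1 := by
      have hr := getD_append_right' (List.range' 1 b) (List.range' 1 a) (i - b) (by simpa using hj)
      rw [List.length_range'] at hr
      rw [hv, show i = b + (i - b) from by omega, hr]
      rw [getD_eq_get' _ _ (by simpa using hj), List.getElem_range']
      omega
    refine ⟨by rw [hval]; omega, ?_⟩
    have hprev : v.getD (b - 1) 0 = b := by
      rw [hv, getD_append_range' b _ (b - 1) (by omega)]; omega
    have hfol := le_foldr_take v (b - 1) i (by omega) (by omega)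
    rw [hprev] at hfol
    rw [hval]
    omega

lemma canon_count (n : ℕ) (x : ℕ) :
    (List.range' 1 ((n + 1) / 2) ++ List.range' 1 (n / 2)).count x ≤ 2 := by
  rw [List.count_append, count_range'', count_range'']
  split <;> split <;> omega

/-- an RGF of length `n` in which no letter appears more than twice
maximizes spread over `R_n(123)` iff it has the form `1 2 … ⌈n/2⌉ σ`, with `σ` a
permutation of `{1, …, ⌊n/2⌋}`. -/
theorem spread_maximizer_iff (n : ℕ) (w : List ℕ) (hw : w.length = n)
    (hrgf : IsRGFL w) (htwice : ∀ l : ℕ, w.count l ≤ 2) :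
    (∀ v : List ℕ, v.length = n → IsRGFL v → (∀ l : ℕ, v.count l ≤ 2) →
        spreadL v ≤ spreadL w) ↔
      ∃ σ : List ℕ, σ.Perm (List.range' 1 (n / 2)) ∧
        w = List.range' 1 ((n + 1) / 2) ++ σ := by
  constructor
  · intro hmaxim
    have hclen : (List.range' 1 ((n + 1) / 2) ++ List.range' 1 (n / 2)).length = n := by
      simp [List.length_append]; omega
    have h1 := hmaxim _ hclen (canon_rgf n) (canon_count n)
    have h2 : spreadL (List.range' 1 ((n + 1) / 2) ++ List.range' 1 (n / 2))
        = (n / 2) * ((n + 1) / 2) := form_spread n _ (List.Perm.refl _)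
    have h3 := (key w hrgf htwice).1
    rw [hw] at h3
    have h4 : spreadL w = (n / 2) * ((n + 1) / 2) := le_antisymm h3 (by rw [← h2]; exact h1)
    have h5 := (key w hrgf htwice).2
    rw [hw] at h5
    exact h5 h4
  · rintro ⟨σ, hperm, heq⟩ v hvlen hvrgf hvcnt
    have h1 := (key v hvrgf hvcnt).1
    rw [hvlen] at h1
    have h2 : spreadL w = (n / 2) * ((n + 1) / 2) := by rw [heq]; exact form_spread n σ hperm
    rw [h2]
    exact h1

end
end

section
/- For n ≥ 2, SB_n(1/2/3, 13/2; q,t) = q^{n-1} t + (n-1) q^{n-2} t², i.e. the joint (spread, block) generating function over partitions of [n] avoiding both 1/2/3 and 13/2. -/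
open scoped Classical
noncomputable section

/-- The joint generating function of spread and block over partitions of `[n]`
avoiding both patterns `Q₁` and `Q₂`. -/
def SB2 {k₁ k₂ : ℕ} (n : ℕ) (Q₁ : SetPartition k₁) (Q₂ : SetPartition k₂) (q t : ℚ) : ℚ :=
  ∑ P ∈ Finset.univ.filter
      (fun P : SetPartition n => SPAvoids P Q₁ ∧ SPAvoids P Q₂),
    q ^ spread P * t ^ blockNum P

-- test basic unfolding
def Sk (n k : ℕ) : SetPartition n := Setoid.ker (fun i : Fin n => decide (k ≤ (i:ℕ)))

lemma Sk_r {n k : ℕ} (a b : Fin n) : (Sk n k).r a b ↔ ((k ≤ (a:ℕ)) ↔ (k ≤ (b:ℕ))) := by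
  unfold Sk; simp [Setoid.ker_def, decide_eq_decide]

lemma strictMono_fin3 {α} [Preorder α] {f : Fin 3 → α} (h01 : f 0 < f 1) (h12 : f 1 < f 2) :
    StrictMono f := by
  intro a b hab
  fin_cases a <;> fin_cases b <;> first
    | exact absurd hab (by decide)
    | exact h01
    | exact h12
    | exact h01.trans h12

example : p13_2.r 0 1 ↔ False := by unfold p13_2; simp [Setoid.ker_def]
example : p13_2.r 0 2 ↔ True := by unfold p13_2; simp [Setoid.ker_def]

lemma avoid_downward {n : ℕ} {P : SetPartition n} (hA : SPAvoids P p13_2)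
    {a b c : Fin n} (hab : a < b) (hbc : b < c) (hac : P.r a c) : P.r a b := by
  by_contra hnab
  have hnbc : ¬ P.r b c := fun h => hnab (P.trans' hac (P.symm' h))
  have hnba : ¬ P.r b a := fun h => hnab (P.symm' h)
  have hncb : ¬ P.r c b := fun h => hnbc (P.symm' h)
  exact hA ⟨![a, b, c], strictMono_fin3 (by simpa using hab) (by simpa using hbc),
    by
      intro x y
      unfold p13_2
      fin_cases x <;> fin_cases y <;>
        simp [Setoid.ker_def, P.refl', hac, hnab, hnbc, hnba, hncb, P.symm' hac]⟩

lemma avoid_two {n : ℕ} {P : SetPartition n} (hA : SPAvoids P p1_2_3)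
    {a b c : Fin n} (hab : a < b) (hbc : b < c)
    (hnab : ¬ P.r a b) (hnac : ¬ P.r a c) : P.r b c := by
  by_contra hnbc
  have hnba : ¬ P.r b a := fun h => hnab (P.symm' h)
  have hnca : ¬ P.r c a := fun h => hnac (P.symm' h)
  have hncb : ¬ P.r c b := fun h => hnbc (P.symm' h)
  exact hA ⟨![a, b, c], strictMono_fin3 (by simpa using hab) (by simpa using hbc),
    by
      intro x y
      unfold p1_2_3
      fin_cases x <;> fin_cases y <;>
        simp [Setoid.ker_def, P.refl', hnab, hnac, hnbc, hnba, hnca, hncb]⟩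

lemma Sk_avoids1 {n k : ℕ} : SPAvoids (Sk n k) p1_2_3 := by
  rintro ⟨f, hf, hr⟩
  have h01 := (hr 0 1).not
  have h02 := (hr 0 2).not
  have h12 := (hr 1 2).not
  rw [Sk_r] at h01 h02 h12
  unfold p1_2_3 at h01 h02 h12
  simp [Setoid.ker_def] at h01 h02 h12
  tauto

lemma Sk_avoids2 {n k : ℕ} : SPAvoids (Sk n k) p13_2 := by
  rintro ⟨f, hf, hr⟩
  have h01 := (hr 0 1).not
  have h02 := (hr 0 2)
  rw [Sk_r] at h01 h02
  unfold p13_2 at h01 h02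
  simp [Setoid.ker_def] at h01 h02
  have m01 : (f 0 : ℕ) < f 1 := hf (by decide)
  have m12 : (f 1 : ℕ) < f 2 := hf (by decide)
  omega

lemma avoids_iff_s13 {n : ℕ} (hn : 2 ≤ n) (P : SetPartition n) :
    (SPAvoids P p1_2_3 ∧ SPAvoids P p13_2) ↔ ∃ k ∈ Finset.Icc 1 n, Sk n k = P := by
  constructor
  · rintro ⟨hA1, hA2⟩
    have hn0 : 0 < n := by omega
    set z : Fin n := ⟨0, hn0⟩ with hz
    set A : Set ℕ := {j : ℕ | j = n ∨ ∃ h : j < n, ¬ P.r z ⟨j, h⟩} with hA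
    have hAn : n ∈ A := Or.inl rfl
    have hAne : A.Nonempty := ⟨n, hAn⟩
    set k := sInf A with hk
    have hkA : k ∈ A := Nat.sInf_mem hAne
    have hkle : k ≤ n := Nat.sInf_le hAn
    have hk1 : 1 ≤ k := by
      rcases Nat.eq_zero_or_pos k with h0 | h; swap; · exact h
      rw [h0] at hkA
      rcases hkA with h | ⟨h, hr⟩
      · omega
      · exact absurd (P.refl' z) hr
    -- key: P.r z i ↔ i.val < k
    have key : ∀ i : Fin n, P.r z i ↔ (i : ℕ) < k := by
      intro i
      constructor
      · intro hri
        by_contra hik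
        push_neg at hik
        rcases hkA with h | ⟨h, hr⟩
        · omega
        · rcases eq_or_lt_of_le hik with heq | hlt
          · exact hr (by rwa [show (⟨k, h⟩ : Fin n) = i from Fin.ext heq])
          · exact hr (avoid_downward hA2 (show z < ⟨k, h⟩ by rw [hz, Fin.lt_def]; exact hk1)
              (show (⟨k, h⟩ : Fin n) < i by rw [Fin.lt_def]; exact hlt) hri)
      · intro hik
        by_contra hri
        have : (i : ℕ) ∈ A := Or.inr ⟨i.isLt, by rwa [Fin.eta]⟩
        have := Nat.sInf_le this
        omega
    refine ⟨k, Finset.mem_Icc.mpr ⟨hk1, hkle⟩, ?_⟩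
    apply Setoid.ext
    intro a b
    rw [Sk_r]
    have ha := key a
    have hb := key b
    constructor
    · intro hiff
      by_cases hak : (a : ℕ) < k
      · have hbk : (b : ℕ) < k := by omega
        exact P.trans' (P.symm' (ha.mpr hak)) (hb.mpr hbk)
      · have hbk : ¬ (b : ℕ) < k := by omega
        have hna : ¬ P.r z a := fun h => hak (ha.mp h)
        have hnb : ¬ P.r z b := fun h => hbk (hb.mp h)
        have ha0 : (0 : ℕ) < (a : ℕ) := by
          rcases Nat.eq_zero_or_pos (a : ℕ) with h | h
          · exact absurd (by rw [show a = z from Fin.ext h]) hna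
          · exact h
        have hb0 : (0 : ℕ) < (b : ℕ) := by
          rcases Nat.eq_zero_or_pos (b : ℕ) with h | h
          · exact absurd (by rw [show b = z from Fin.ext h]) hnb
          · exact h
        rcases lt_trichotomy a b with h | h | h
        · exact avoid_two hA1 (show z < a by rw [hz, Fin.lt_def]; exact ha0) h hna hnb
        · rw [h]
        · exact P.symm' (avoid_two hA1 (show z < b by rw [hz, Fin.lt_def]; exact hb0) h hnb hna)
    · intro hr
      by_cases hak : (a : ℕ) < k
      · have : P.r z b := P.trans' (ha.mpr hak) hr
        have := hb.mp this
        omega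
      · have hbk : ¬ (b : ℕ) < k :=
          fun hc => hak (ha.mp (P.trans' (hb.mpr hc) (P.symm' hr)))
        constructor <;> intro _ <;> omega
  · rintro ⟨k, -, rfl⟩
    exact ⟨Sk_avoids1, Sk_avoids2⟩

lemma blockMin_Sk {n k : ℕ} (hk1 : 1 ≤ k) (i : Fin n) :
    blockMin (Sk n k) i = if (i : ℕ) < k then 0 else k := by
  unfold blockMin
  split_ifs with h
  · refine Nat.sInf_eq_zero.mpr (Or.inl ?_)
    exact ⟨i.pos, by rw [Sk_r]; simp only [Fin.val_mk]; constructor <;> intro <;> omega⟩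
  · have hkn : k < n := by omega
    have hmemk : k ∈ {j : ℕ | ∃ h : j < n, (Sk n k).r ⟨j, h⟩ i} :=
      ⟨hkn, by rw [Sk_r]; simp only [Fin.val_mk]; constructor <;> intro <;> omega⟩
    refine le_antisymm (Nat.sInf_le hmemk) ?_
    obtain ⟨hlt, hr⟩ := Nat.sInf_mem (⟨k, hmemk⟩ :
      Set.Nonempty {j : ℕ | ∃ h : j < n, (Sk n k).r ⟨j, h⟩ i})
    rw [Sk_r] at hr
    simp only [Fin.val_mk] at hr
    omega

lemma blockMax_Sk {n k : ℕ} (hk1 : 1 ≤ k) (hkn : k ≤ n) (i : Fin n) :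
    blockMax (Sk n k) i = if (i : ℕ) < k then k - 1 else n - 1 := by
  have hn0 : 0 < n := i.pos
  unfold blockMax
  have hbdd : BddAbove {j : ℕ | ∃ h : j < n, (Sk n k).r ⟨j, h⟩ i} := by
    refine ⟨n, fun j hj => ?_⟩
    obtain ⟨h, -⟩ := hj
    omega
  have hmemi : (i : ℕ) ∈ {j : ℕ | ∃ h : j < n, (Sk n k).r ⟨j, h⟩ i} :=
    ⟨i.isLt, by rw [Fin.eta]⟩
  split_ifs with h
  · refine le_antisymm (csSup_le ⟨_, hmemi⟩ ?_) (le_csSup hbdd ?_)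
    · rintro j ⟨hjn, hr⟩
      rw [Sk_r] at hr
      simp only [Fin.val_mk] at hr
      omega
    · exact ⟨by omega, by rw [Sk_r]; simp only [Fin.val_mk]; constructor <;> intro <;> omega⟩
  · refine le_antisymm (csSup_le ⟨_, hmemi⟩ ?_) (le_csSup hbdd ?_)
    · rintro j ⟨hjn, hr⟩
      omega
    · exact ⟨by omega, by rw [Sk_r]; simp only [Fin.val_mk]; constructor <;> intro <;> omega⟩

lemma spread_Sk {n k : ℕ} (hk1 : 1 ≤ k) (hkn : k ≤ n) (hn : 1 ≤ n) :
    spread (Sk n k) = if k < n then n - 2 else n - 1 := by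
  have hn0 : 0 < n := hn
  unfold spread
  split_ifs with h
  · have hfil : Finset.univ.filter (fun i : Fin n => blockMin (Sk n k) i = (i : ℕ))
        = {⟨0, hn0⟩, ⟨k, h⟩} := by
      ext i
      simp only [Finset.mem_filter, Finset.mem_univ, true_and, Finset.mem_insert,
        Finset.mem_singleton, blockMin_Sk hk1]
      constructor
      · intro hi
        split_ifs at hi
        · left; exact Fin.ext hi.symm
        · right; exact Fin.ext hi.symm
      · rintro (rfl | rfl) <;> simp
    rw [hfil, Finset.sum_pair (by intro hc; rw [Fin.mk.injEq] at hc; omega)]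
    rw [blockMax_Sk hk1 hkn, blockMax_Sk hk1 hkn]
    simp only [Fin.val_mk]
    split_ifs <;> omega
  · have hkeq : k = n := by omega
    have hfil : Finset.univ.filter (fun i : Fin n => blockMin (Sk n k) i = (i : ℕ))
        = {⟨0, hn0⟩} := by
      ext i
      simp only [Finset.mem_filter, Finset.mem_univ, true_and, Finset.mem_singleton,
        blockMin_Sk hk1]
      rw [if_pos (by omega)]
      constructor
      · intro hi; exact Fin.ext hi.symm
      · rintro rfl; rfl
    rw [hfil, Finset.sum_singleton, blockMax_Sk hk1 hkn]
    simp only [Fin.val_mk]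
    split_ifs <;> omega

lemma blockNum_Sk {n k : ℕ} (hk1 : 1 ≤ k) (hkn : k ≤ n) (hn : 1 ≤ n) :
    blockNum (Sk n k) = if k < n then 2 else 1 := by
  have hn0 : 0 < n := hn
  unfold blockNum
  split_ifs with h
  · have him : Finset.univ.image (fun i : Fin n => Quotient.mk (Sk n k) i)
        = {Quotient.mk (Sk n k) ⟨0, hn0⟩, Quotient.mk (Sk n k) ⟨k, h⟩} := by
      ext x
      simp only [Finset.mem_image, Finset.mem_univ, true_and, Finset.mem_insert,
        Finset.mem_singleton]
      constructor
      · rintro ⟨i, rfl⟩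
        by_cases hik : (i : ℕ) < k
        · left
          exact Quotient.sound ((Sk_r i ⟨0, hn0⟩).mpr (by simp; omega))
        · right
          exact Quotient.sound ((Sk_r i ⟨k, h⟩).mpr (by simp; omega))
      · rintro (rfl | rfl) <;> exact ⟨_, rfl⟩
    rw [him, Finset.card_insert_of_notMem, Finset.card_singleton]
    simp only [Finset.mem_singleton]
    intro hc
    have := (Sk_r (n := n) ⟨0, hn0⟩ ⟨k, h⟩).mp (Quotient.exact hc)
    simp at this
    omega
  · have hkeq : k = n := by omega
    have him : Finset.univ.image (fun i : Fin n => Quotient.mk (Sk n k) i)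
        = {Quotient.mk (Sk n k) ⟨0, hn0⟩} := by
      ext x
      simp only [Finset.mem_image, Finset.mem_univ, true_and, Finset.mem_singleton]
      constructor
      · rintro ⟨i, rfl⟩
        exact Quotient.sound ((Sk_r i ⟨0, hn0⟩).mpr (by simp; omega))
      · rintro rfl; exact ⟨_, rfl⟩
    rw [him, Finset.card_singleton]

lemma Sk_inj_aux {n k k' : ℕ} (hk1 : 1 ≤ k) (h : k < k') (hk'n : k' ≤ n)
    (heq : Sk n k = Sk n k') : False := by
  have hkn : k < n := by omega
  have h1 : (Sk n k).r ⟨0, by omega⟩ ⟨k, hkn⟩ ↔ (Sk n k').r ⟨0, by omega⟩ ⟨k, hkn⟩ := by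
    rw [heq]
  rw [Sk_r, Sk_r] at h1
  simp only [Fin.val_mk] at h1
  omega

lemma Sk_inj {n : ℕ} : ∀ k ∈ Finset.Icc 1 n, ∀ k' ∈ Finset.Icc 1 n,
    Sk n k = Sk n k' → k = k' := by
  intro k hk k' hk' heq
  rw [Finset.mem_Icc] at hk hk'
  rcases lt_trichotomy k k' with h | h | h
  · exact absurd (Sk_inj_aux hk.1 h hk'.2 heq) not_false
  · exact h
  · exact absurd (Sk_inj_aux hk'.1 h hk.2 heq.symm) not_false

/-- the joint generating function over `Π_n(1/2/3, 13/2)` for `n ≥ 2`. -/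
theorem SB2_1_2_3_13_2 (n : ℕ) (hn : 2 ≤ n) (q t : ℚ) :
    SB2 n p1_2_3 p13_2 q t = q ^ (n - 1) * t + (n - 1) * q ^ (n - 2) * t ^ 2 := by
  obtain ⟨m, rfl⟩ : ∃ m, n = m + 2 := ⟨n - 2, by omega⟩
  have hkey : Finset.univ.filter
      (fun P : SetPartition (m + 2) => SPAvoids P p1_2_3 ∧ SPAvoids P p13_2)
      = (Finset.Icc 1 (m + 2)).image (Sk (m + 2)) := by
    ext P
    simp only [Finset.mem_filter, Finset.mem_univ, true_and, Finset.mem_image]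
    rw [avoids_iff_s13 hn P]
  rw [SB2, hkey, Finset.sum_image Sk_inj]
  have hIcc : Finset.Icc 1 (m + 2) = insert (m + 2) (Finset.Icc 1 (m + 1)) := by
    ext j; simp [Finset.mem_Icc]; omega
  rw [hIcc, Finset.sum_insert (by simp [Finset.mem_Icc])]
  have hterm : ∀ k ∈ Finset.Icc 1 (m + 1),
      q ^ spread (Sk (m + 2) k) * t ^ blockNum (Sk (m + 2) k) = q ^ m * t ^ 2 := by
    intro k hk
    rw [Finset.mem_Icc] at hk
    rw [spread_Sk hk.1 (by omega) (by omega), blockNum_Sk hk.1 (by omega) (by omega)]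
    rw [if_pos (by omega), if_pos (by omega)]
    norm_num
  rw [Finset.sum_congr rfl hterm, Finset.sum_const, Nat.card_Icc]
  rw [spread_Sk (by omega) (by omega) (by omega), blockNum_Sk (by omega) (by omega) (by omega)]
  rw [if_neg (by omega), if_neg (by omega)]
  have e1 : m + 2 - 1 = m + 1 := by omega
  have e2 : m + 2 - 2 = m := by omega
  rw [e1, e2]
  rw [nsmul_eq_mul]
  push_cast
  ring

end
end
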